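/- arXiv:2201.09688 — 7 statements merged into one kernel-verified Lean document; each statement's English description precedes it below -/
import Mathlib

section
/- Let E be a field of characteristic p and M an E-vector space with a valuation val_M satisfying val_M(xm) = val_M(m) for x in E^×, separated and complete. If a sequence (m_n) in M tends to 0, then the function f : Z_p → M defined by f(z) = Σ_{n≥0} C(z,n)·m_n (where C(z,n) is the binomial coefficient reduced mod p, viewed in F_p ⊂ E) is continuous, and inf_{z∈Z_p} val_M(f(z)) = inf_{n≥0} val_M(m_n). -/
open Filter Topology

/-- The binomial coefficient `C(z,n)` of a `p`-adic integer `z`, reduced modulo `p` and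
viewed in the field `E` of characteristic `p` (via the prime field `𝔽_p ⊆ E`). -/
noncomputable def binomMod (p : ℕ) [Fact p.Prime] (E : Type*) [Field E] [CharP E p]
    (z : ℤ_[p]) (n : ℕ) : E :=
  ZMod.castHom dvd_rfl E (((z.appr (n + 1)).choose n : ZMod p))

namespace MahlerAux

variable {p : ℕ} [hp : Fact p.Prime]

/-- Lucas-type congruence: `C(a,j) mod p` depends only on `a mod p^t` for `j < p^t`. -/
lemma choose_zmod_congr : ∀ (t : ℕ) {a b j : ℕ}, j < p ^ t → a ≡ b [MOD p ^ t] →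
    (a.choose j : ZMod p) = (b.choose j : ZMod p) := by
  intro t
  induction t with
  | zero =>
    intro a b j hj _
    simp only [pow_zero, Nat.lt_one_iff] at hj
    subst hj; simp
  | succ t ih =>
    intro a b j hj hab
    have hpd : p ∣ p ^ (t + 1) := dvd_pow_self p t.succ_ne_zero
    have h1 : a % p = b % p := by
      have := congrArg (· % p) hab
      simpa [Nat.mod_mod_of_dvd _ hpd] using this
    have h2 : a / p ≡ b / p [MOD p ^ t] := by
      have := congrArg (· / p) hab
      simpa [Nat.ModEq, pow_succ', Nat.mod_mul_right_div_self] using this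
    have h3 : j / p < p ^ t := by
      rw [Nat.div_lt_iff_lt_mul hp.out.pos]
      calc j < p ^ (t + 1) := hj
        _ = p ^ t * p := pow_succ p t
    calc (a.choose j : ZMod p)
        = ((a % p).choose (j % p) * ((a / p).choose (j / p)) : ℕ) := by
          exact_mod_cast (ZMod.natCast_eq_natCast_iff _ _ _).mpr
            Choose.choose_modEq_choose_mod_mul_choose_div_nat
      _ = ((b % p).choose (j % p) * ((b / p).choose (j / p)) : ℕ) := by
          push_cast
          rw [h1, ih h3 h2]
      _ = (b.choose j : ZMod p) := by
          exact_mod_cast ((ZMod.natCast_eq_natCast_iff _ _ _).mpr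
            Choose.choose_modEq_choose_mod_mul_choose_div_nat).symm

lemma natCast_modEq_of_mem_span {a b k : ℕ}
    (h : ((a : ℤ_[p]) - (b : ℤ_[p])) ∈ Ideal.span {(p : ℤ_[p]) ^ k}) :
    a ≡ b [MOD p ^ k] := by
  have : PadicInt.toZModPow k ((a : ℤ_[p]) - (b : ℤ_[p])) = 0 := by
    rw [← RingHom.mem_ker, PadicInt.ker_toZModPow]; exact h
  rw [map_sub, sub_eq_zero, map_natCast, map_natCast] at this
  exact (ZMod.natCast_eq_natCast_iff _ _ _).mp this

lemma appr_congr {z z' : ℤ_[p]} {n N : ℕ} (hn : n ≤ N)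
    (h : z - z' ∈ Ideal.span {(p : ℤ_[p]) ^ N}) :
    z.appr n = z'.appr n := by
  have hmem : ((z.appr n : ℤ_[p]) - (z'.appr n : ℤ_[p])) ∈ Ideal.span {(p : ℤ_[p]) ^ n} := by
    have h1 := z.appr_spec n
    have h2 := z'.appr_spec n
    have hN : z - z' ∈ Ideal.span {(p : ℤ_[p]) ^ n} := by
      apply Ideal.span_singleton_le_span_singleton.mpr (pow_dvd_pow _ hn) h
    convert Ideal.sub_mem _ (Ideal.add_mem _ hN h2) h1 using 1
    ring
  have := natCast_modEq_of_mem_span (p := p) hmem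
  exact Nat.ModEq.eq_of_lt_of_lt this (z.appr_lt n) (z'.appr_lt n)

/-- discrete difference operator -/
def delta {M : Type*} [AddCommGroup M] (F : ℕ → M) : ℕ → M := fun k => F (k + 1) - F k

lemma delta_formula {E : Type*} [Semiring E] {M : Type*} [AddCommGroup M] [Module E M]
    (n : ℕ) : ∀ (m : ℕ → M) (F : ℕ → M),
    (∀ k, F k = ∑ j ∈ Finset.range (k + 1), (k.choose j : E) • m j) →
    ∀ k, delta^[n] F k = ∑ j ∈ Finset.range (k + 1), (k.choose j : E) • m (j + n) := by
  induction n with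
  | zero => intro m F hF k; simpa using hF k
  | succ n ih =>
    intro m F hF k
    rw [Function.iterate_succ_apply]
    have hd : ∀ k, delta F k = ∑ j ∈ Finset.range (k + 1), (k.choose j : E) • m (j + 1) := by
      intro k
      have e1 : F (k + 1) =
          (∑ i ∈ Finset.range (k + 1), ((k.choose i : E) • m (i + 1)
            + (k.choose (i + 1) : E) • m (i + 1))) + m 0 := by
        rw [hF (k + 1), Finset.sum_range_succ']
        simp only [Nat.choose_zero_right, Nat.cast_one, one_smul]
        congr 1
        apply Finset.sum_congr rfl
        intro i _
        rw [Nat.choose_succ_succ]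
        push_cast
        rw [add_smul]
      have e2 : F k =
          (∑ i ∈ Finset.range (k + 1), (k.choose (i + 1) : E) • m (i + 1)) + m 0 := by
        rw [hF k, Finset.sum_range_succ', Finset.sum_range_succ]
        simp [Nat.choose_succ_self]
      rw [delta, e1, e2, Finset.sum_add_distrib]
      abel
    have := ih (fun j => m (j + 1)) (delta F) hd k
    rw [this]
    apply Finset.sum_congr rfl
    intro j _
    rw [add_assoc]

lemma binomMod_congr (E : Type*) [Field E] [CharP E p] {z z' : ℤ_[p]} {n N : ℕ}
    (hn : n + 1 ≤ N) (h : z - z' ∈ Ideal.span {(p : ℤ_[p]) ^ N}) :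
    binomMod p E z n = binomMod p E z' n := by
  unfold binomMod
  rw [appr_congr hn h]

lemma binomMod_natCast (E : Type*) [Field E] [CharP E p] (k j : ℕ) :
    binomMod p E (k : ℤ_[p]) j = ((k.choose j : ℕ) : E) := by
  have h1 : k ≡ ((k : ℤ_[p])).appr (j + 1) [MOD p ^ (j + 1)] :=
    natCast_modEq_of_mem_span (((k : ℤ_[p])).appr_spec (j + 1))
  have hj : j < p ^ (j + 1) :=
    lt_of_lt_of_le (Nat.lt_pow_self hp.out.one_lt : j < p ^ j)
      (Nat.pow_le_pow_right hp.out.pos (Nat.le_succ j))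
  have h2 : ((((k : ℤ_[p])).appr (j + 1)).choose j : ZMod p) = (k.choose j : ZMod p) :=
    choose_zmod_congr (j + 1) hj h1.symm
  unfold binomMod
  rw [h2, map_natCast]

end MahlerAux

open MahlerAux in
/-- Mahler series: if `m n → 0` in the separated complete valued `E`-vector space `M`,
then `f z = ∑ C(z,n) • m n` is continuous and `inf_z val (f z) = inf_n val (m n)`. -/
theorem mahler_series_continuous_and_inf
    {p : ℕ} [Fact p.Prime] {E : Type*} [Field E] [CharP E p]
    {M : Type*} [AddCommGroup M] [Module E M]
    [UniformSpace M] [IsUniformAddGroup M] [CompleteSpace M] [T2Space M]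
    (v : M → EReal)
    (hv_top : ∀ x : M, v x = ⊤ ↔ x = 0)
    (hv_smul : ∀ (c : E) (x : M), c ≠ 0 → v (c • x) = v x)
    (hv_add : ∀ x y : M, min (v x) (v y) ≤ v (x + y))
    (hnhds : ∀ s : Set M, s ∈ 𝓝 (0 : M) ↔ ∃ r : ℝ, ∀ x : M, (r : EReal) ≤ v x → x ∈ s)
    (m : ℕ → M) (hm : Tendsto m atTop (𝓝 0))
    (f : ℤ_[p] → M)
    (hf : ∀ z : ℤ_[p], HasSum (fun n => binomMod p E z n • m n) (f z)) :
    Continuous f ∧ (⨅ z : ℤ_[p], v (f z)) = ⨅ n : ℕ, v (m n) := by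
  classical
  have hp' : Fact p.Prime := inferInstance
  have hv_zero : v (0 : M) = ⊤ := (hv_top 0).mpr rfl
  have hv_neg : ∀ x : M, v (-x) = v x := by
    intro x
    have h1 : (-1 : E) ≠ 0 := by simp
    simpa using hv_smul (-1) x h1
  set G : ℝ → AddSubgroup M := fun r =>
    { carrier := {x | (r : EReal) ≤ v x}
      zero_mem' := by simp [Set.mem_setOf_eq, hv_zero]
      add_mem' := by
        intro a b ha hb
        exact le_trans (le_min ha hb) (hv_add a b)
      neg_mem' := by
        intro a ha
        simpa [Set.mem_setOf_eq, hv_neg] using ha } with hG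
  have hGmem : ∀ (r : ℝ) (x : M), x ∈ G r ↔ (r : EReal) ≤ v x := fun r x => Iff.rfl
  have hGnhds : ∀ r : ℝ, (G r : Set M) ∈ 𝓝 (0 : M) := by
    intro r
    rw [hnhds]
    exact ⟨r, fun x hx => hx⟩
  have hGclosed : ∀ r, IsClosed (G r : Set M) := fun r =>
    AddSubgroup.isClosed_of_isOpen _ (AddSubgroup.isOpen_of_mem_nhds _ (hGnhds r))
  have hsum_mem : ∀ (r : ℝ) (g : ℕ → M) (s : M), HasSum g s → (∀ n, g n ∈ G r) → s ∈ G r := by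
    intro r g s hs hg
    exact (hGclosed r).mem_of_tendsto hs
      (Filter.Eventually.of_forall fun t => AddSubgroup.sum_mem _ (fun i _ => hg i))
  have hterm : ∀ (r : ℝ) (c : E) (x : M), (r : EReal) ≤ v x → c • x ∈ G r := by
    intro r c x hx
    by_cases hc : c = 0
    · rw [hc, zero_smul]
      exact (G r).zero_mem
    · rw [hGmem, hv_smul c x hc]
      exact hx
  have hcont : Continuous f := by
    rw [continuous_iff_continuousAt]
    intro z₀
    have key : Tendsto (fun z => f z - f z₀) (𝓝 z₀) (𝓝 0) := by
      rw [Filter.tendsto_def]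
      intro s hs
      obtain ⟨r, hr⟩ := (hnhds s).mp hs
      obtain ⟨N, hN⟩ := Filter.eventually_atTop.mp (hm.eventually_mem (hGnhds r))
      have hrad : (0 : ℝ) < (p : ℝ) ^ (-(N : ℤ)) := by
        apply zpow_pos
        exact_mod_cast hp'.out.pos
      apply Filter.mem_of_superset (Metric.closedBall_mem_nhds z₀ hrad)
      intro z hz
      apply hr
      have hzmem : z - z₀ ∈ Ideal.span {(p : ℤ_[p]) ^ N} := by
        rw [← PadicInt.norm_le_pow_iff_mem_span_pow]
        simpa [dist_eq_norm] using hz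
      have hdiff : HasSum (fun n => (binomMod p E z n - binomMod p E z₀ n) • m n)
          (f z - f z₀) := by
        simpa [sub_smul] using (hf z).sub (hf z₀)
      refine hsum_mem r _ _ hdiff ?_
      intro n
      by_cases hn : n + 1 ≤ N
      · rw [binomMod_congr E hn hzmem, sub_self, zero_smul]
        exact (G r).zero_mem
      · exact hterm r _ _ (hN n (by omega))
    have h2 := key.add_const (f z₀)
    simpa [ContinuousAt] using h2
  have hlow : ∀ z, (⨅ n, v (m n)) ≤ v (f z) := by
    intro z
    by_contra hlt
    push_neg at hlt
    obtain ⟨r, hr1, hr2⟩ := EReal.exists_between_coe_real hlt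
    have hmem : f z ∈ G r := by
      refine hsum_mem r _ _ (hf z) ?_
      intro n
      exact hterm r _ _ (le_of_lt (lt_of_lt_of_le hr2 (iInf_le _ n)))
    exact absurd ((hGmem r _).mp hmem) (not_le.mpr hr1)
  have hF : ∀ k : ℕ, f (k : ℤ_[p]) =
      ∑ j ∈ Finset.range (k + 1), ((k.choose j : ℕ) : E) • m j := by
    intro k
    have h1 : HasSum (fun j => ((k.choose j : ℕ) : E) • m j) (f (k : ℤ_[p])) := by
      have hco : ∀ j, binomMod p E (k : ℤ_[p]) j = ((k.choose j : ℕ) : E) :=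
        fun j => binomMod_natCast E k j
      simpa [hco] using hf (k : ℤ_[p])
    have hzero : ∀ j ∉ Finset.range (k + 1), ((k.choose j : ℕ) : E) • m j = 0 := by
      intro j hj
      have hkj : k < j := by
        simp only [Finset.mem_range] at hj
        omega
      rw [Nat.choose_eq_zero_of_lt hkj]
      simp
    exact h1.unique (hasSum_sum_of_ne_finset_zero hzero)
  have hup : ∀ n, (⨅ z : ℤ_[p], v (f z)) ≤ v (m n) := by
    intro n
    set F : ℕ → M := fun k => f (k : ℤ_[p]) with hFdef
    have hmn : delta^[n] F 0 = m n := by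
      rw [MahlerAux.delta_formula (E := E) n m F hF 0]
      simp
    have hind : ∀ (t k : ℕ), (⨅ z : ℤ_[p], v (f z)) ≤ v (delta^[t] F k) := by
      intro t
      induction t with
      | zero => intro k; exact iInf_le _ _
      | succ t ih =>
        intro k
        rw [Function.iterate_succ_apply']
        show (⨅ z : ℤ_[p], v (f z)) ≤ v (delta^[t] F (k + 1) - delta^[t] F k)
        rw [sub_eq_add_neg]
        refine le_trans (le_min (ih (k + 1)) ?_) (hv_add _ _)
        rw [hv_neg]
        exact ih k
    calc (⨅ z : ℤ_[p], v (f z)) ≤ v (delta^[n] F 0) := hind n 0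
      _ = v (m n) := by rw [hmn]
  exact ⟨hcont, le_antisymm (le_iInf hup) (le_iInf hlow)⟩
end

section
/- With E, M as above, every continuous function f : Z_p → M admits a unique Mahler expansion: there exists a unique sequence (m_n(f)) in M with m_n(f) → 0 such that f(z) = Σ_{n≥0} C(z,n)·m_n(f) for all z ∈ Z_p; moreover m_n(f) = (-1)^n Σ_{i=0}^n (-1)^i C(n,i) f(i). -/
open Filter Topology Finset Uniformity

/-! ### Auxiliary lemmas -/

section Delta

lemma mahler_delta_int (k j : ℕ) :
    ∑ n ∈ range (k + 1), (-1 : ℤ) ^ n * (k.choose n : ℤ) * (n.choose j : ℤ)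
      = (-1) ^ j * (if k = j then 1 else 0) := by
  rcases le_or_gt j k with hj | hj
  · have h1 : ∀ n ∈ range (k + 1), n ∉ Finset.Ico j (k + 1) →
        (-1 : ℤ) ^ n * (k.choose n : ℤ) * (n.choose j : ℤ) = 0 := by
      intro n hn hn'
      simp only [mem_range] at hn
      simp only [Finset.mem_Ico, not_and, not_lt] at hn'
      have hnj : n < j := by
        by_contra h
        exact absurd (hn' (le_of_not_gt h)) (not_le.mpr hn)
      rw [Nat.choose_eq_zero_of_lt hnj]
      ring
    have hsub : Finset.Ico j (k + 1) ⊆ range (k + 1) := by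
      intro x hx; simp only [Finset.mem_Ico] at hx; simp only [mem_range]; omega
    rw [← Finset.sum_subset hsub h1]
    rw [Finset.sum_Ico_eq_sum_range]
    have h2 : ∀ t ∈ range (k + 1 - j), (-1 : ℤ) ^ (j + t) * (k.choose (j + t) : ℤ) *
        ((j + t).choose j : ℤ) = (-1)^j * (k.choose j : ℤ) * ((-1)^t * ((k - j).choose t : ℤ)) := by
      intro t ht
      simp only [mem_range] at ht
      have htk : j + t ≤ k := by omega
      have hmul := Nat.choose_mul (n := k) (k := j + t) (s := j) (Nat.le_add_right _ _)
      rw [Nat.add_sub_cancel_left] at hmul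
      have hc : (k.choose (j + t) : ℤ) * ((j + t).choose j : ℤ) =
          (k.choose j : ℤ) * ((k - j).choose t : ℤ) := by
        rw [← Nat.cast_mul, ← Nat.cast_mul, hmul]
      calc (-1 : ℤ) ^ (j + t) * (k.choose (j + t) : ℤ) * ((j + t).choose j : ℤ)
          = (-1)^j * (-1)^t * ((k.choose (j+t) : ℤ) * ((j+t).choose j : ℤ)) := by
            rw [pow_add]; ring
        _ = _ := by rw [hc]; ring
    rw [Finset.sum_congr rfl h2, ← Finset.mul_sum]
    have hkj : k + 1 - j = (k - j) + 1 := by omega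
    rw [hkj, Int.alternating_sum_range_choose]
    rcases eq_or_ne k j with rfl | hk
    · simp
    · have : k - j ≠ 0 := by omega
      simp [this, hk]
  · have h1 : ∀ n ∈ range (k + 1), (-1 : ℤ) ^ n * (k.choose n : ℤ) * (n.choose j : ℤ) = 0 := by
      intro n hn
      simp only [mem_range] at hn
      rw [Nat.choose_eq_zero_of_lt (show n < j by omega)]
      ring
    rw [Finset.sum_congr rfl h1]
    simp [hj.ne]

lemma mahler_delta_ring {E : Type*} [CommRing E] (k j : ℕ) :
    ∑ n ∈ range (k + 1), (-1 : E) ^ n * (k.choose n : E) * (n.choose j : E)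
      = (-1) ^ j * (if k = j then 1 else 0) := by
  have h := congrArg (fun x : ℤ => (x : E)) (mahler_delta_int k j)
  rcases eq_or_ne k j with rfl | hk
  · simp only [if_pos rfl] at h ⊢
    push_cast at h
    exact h
  · simp only [if_neg hk] at h ⊢
    push_cast at h
    simpa using h

/-- The backward inversion: recovering coefficients. -/
lemma mahler_inv_backward {E : Type*} [CommRing E] {M : Type*} [AddCommGroup M] [Module E M]
    (m : ℕ → M) (g : ℕ → M)
    (h : ∀ kk : ℕ, g kk = ∑ j ∈ range (kk + 1), (kk.choose j : E) • m j) (n : ℕ) :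
    ∑ i ∈ range (n + 1), ((-1 : E) ^ (n + i) * (n.choose i : E)) • g i = m n := by
  have step1 : ∀ i ∈ range (n + 1),
      ((-1 : E) ^ (n + i) * (n.choose i : E)) • g i
      = ∑ j ∈ range (n + 1), ((-1 : E) ^ (n + i) * (n.choose i : E) * (i.choose j : E)) • m j := by
    intro i hi
    simp only [mem_range] at hi
    rw [h i, Finset.smul_sum]
    rw [← Finset.sum_subset (Finset.range_subset_range.mpr (by omega : i + 1 ≤ n + 1))]
    · apply Finset.sum_congr rfl
      intro j _
      rw [smul_smul]
    · intro j _ hj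
      simp only [mem_range, not_lt] at hj
      rw [Nat.choose_eq_zero_of_lt (by omega : i < j)]
      simp
  rw [Finset.sum_congr rfl step1, Finset.sum_comm]
  have step2 : ∀ j ∈ range (n + 1),
      (∑ i ∈ range (n + 1), ((-1 : E) ^ (n + i) * (n.choose i : E) * (i.choose j : E)) • m j)
      = (if n = j then (1 : E) else 0) • m j := by
    intro j _
    rw [← Finset.sum_smul]
    congr 1
    have : ∀ i ∈ range (n + 1), (-1 : E) ^ (n + i) * (n.choose i : E) * (i.choose j : E)
        = (-1 : E) ^ n * ((-1 : E) ^ i * (n.choose i : E) * (i.choose j : E)) := by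
      intro i _
      rw [pow_add]; ring
    rw [Finset.sum_congr rfl this, ← Finset.mul_sum, mahler_delta_ring, ← mul_assoc]
    rcases eq_or_ne n j with rfl | hnj
    · simp [← mul_pow]
    · simp [hnj]
  rw [Finset.sum_congr rfl step2]
  simp only [ite_smul, one_smul, zero_smul, Finset.sum_ite_eq]
  simp

end Delta

section BinomMod

variable {p : ℕ} [hp : Fact p.Prime]

/-- Lucas-style congruence: `choose` mod `p` only depends on the argument mod `p^L`
when `n < p^L`. -/
lemma mahler_choose_congr_zmod (L : ℕ) : ∀ {a b n : ℕ}, a ≡ b [MOD p ^ L] → n < p ^ L →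
    ((a.choose n : ZMod p) = (b.choose n : ZMod p)) := by
  induction L with
  | zero =>
    intro a b n _ hn
    simp only [pow_zero, Nat.lt_one_iff] at hn
    subst hn
    simp
  | succ L ih =>
    intro a b n hab hn
    have hp2 : 2 ≤ p := hp.out.two_le
    have hmain := Choose.choose_modEq_choose_mod_mul_choose_div_nat (p := p) (n := a) (k := n)
    have hmain' := Choose.choose_modEq_choose_mod_mul_choose_div_nat (p := p) (n := b) (k := n)
    rw [← ZMod.natCast_eq_natCast_iff] at hmain hmain'
    rw [hmain, hmain']
    have hmodp : a % p = b % p :=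
      hab.of_dvd (dvd_pow_self p (Nat.succ_ne_zero L))
    have hdiv : a / p ≡ b / p [MOD p ^ L] := by
      unfold Nat.ModEq
      have h1 : a / p % p ^ L = a % (p * p ^ L) / p := (Nat.mod_mul_right_div_self a p (p ^ L)).symm
      have h2 : b / p % p ^ L = b % (p * p ^ L) / p := (Nat.mod_mul_right_div_self b p (p ^ L)).symm
      rw [h1, h2]
      have hm : a % (p * p ^ L) = b % (p * p ^ L) := by
        have := hab
        rwa [pow_succ, mul_comm (p ^ L) p] at this
      rw [hm]
    have hndiv : n / p < p ^ L := by
      rw [Nat.div_lt_iff_lt_mul (by omega : 0 < p)]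
      calc n < p ^ (L + 1) := hn
        _ = p ^ L * p := by rw [pow_succ]
    push_cast
    rw [hmodp, ih hdiv hndiv]

lemma mahler_nlt_pow (n : ℕ) : n < p ^ (n + 1) := by
  have h2 : 2 ≤ p := hp.out.two_le
  calc n < 2 ^ (n + 1) := by
        have : n < 2 ^ n := Nat.lt_two_pow_self
        omega
    _ ≤ p ^ (n + 1) := Nat.pow_le_pow_left h2 _

/-- `binomMod` via any good enough approximation. -/
lemma binomMod_eq_choose (E : Type*) [Field E] [CharP E p] (z : ℤ_[p]) (a n : ℕ)
    (h : z - (a : ℤ_[p]) ∈ Ideal.span {(p : ℤ_[p]) ^ (n + 1)}) :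
    binomMod p E z n = (a.choose n : E) := by
  have hspec := PadicInt.appr_spec (n + 1) z
  have hcong : ((z.appr (n + 1) : ℕ) : ZMod (p ^ (n + 1))) = (a : ZMod (p ^ (n + 1))) :=
    PadicInt.zmod_congr_of_sub_mem_span (n + 1) z _ _ hspec h
  rw [ZMod.natCast_eq_natCast_iff] at hcong
  have := mahler_choose_congr_zmod (p := p) (n + 1) hcong (mahler_nlt_pow n)
  unfold binomMod
  rw [this, map_natCast]

lemma binomMod_natCast (E : Type*) [Field E] [CharP E p] (a n : ℕ) :
    binomMod p E (a : ℤ_[p]) n = (a.choose n : E) := by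
  apply binomMod_eq_choose
  simp

end BinomMod

section FwdDiff

variable {p : ℕ} [hp : Fact p.Prime] {E : Type*} [Field E] [CharP E p]
  {M : Type*} [AddCommGroup M] [Module E M]

set_option linter.unusedSectionVars false

lemma mahler_iter_fwdDiff (g : ℤ_[p] → M) (n : ℕ) (z : ℤ_[p]) :
    (fwdDiff (1 : ℤ_[p]))^[n] g z
      = ∑ i ∈ range (n + 1), ((-1 : E) ^ (n + i) * (n.choose i : E)) • g (z + (i : ℤ_[p])) := by
  rw [fwdDiff_iter_eq_sum_shift]
  apply Finset.sum_congr rfl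
  intro i hi
  simp only [mem_range] at hi
  have h1 : (i : ℤ_[p]) = i • (1 : ℤ_[p]) := by simp
  rw [h1]
  rw [← Int.cast_smul_eq_zsmul E ((-1 : ℤ) ^ (n - i) * (n.choose i : ℤ))]
  congr 1
  push_cast
  congr 1
  have h2 : n + i = (n - i) + 2 * i := by omega
  rw [h2, pow_add, pow_mul]
  simp

include E in
lemma mahler_fwdDiff_pow_char (g : ℤ_[p] → M) (k : ℕ) (z : ℤ_[p]) :
    (fwdDiff (1 : ℤ_[p]))^[p ^ k] g z = g (z + (p : ℤ_[p]) ^ k) - g z := by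
  rw [mahler_iter_fwdDiff (E := E) g (p ^ k) z]
  rw [Finset.sum_range_succ]
  have hmid : ∑ i ∈ range (p ^ k), (((-1 : E) ^ (p ^ k + i) * ((p ^ k).choose i : E)) •
        g (z + (i : ℤ_[p])))
      = ((-1 : E) ^ (p ^ k + 0) * ((p ^ k).choose 0 : E)) • g (z + ((0 : ℕ) : ℤ_[p])) := by
    apply Finset.sum_eq_single_of_mem 0 (mem_range.mpr (pow_pos hp.out.pos k))
    intro i hi hne
    simp only [mem_range] at hi
    have hz : ((p ^ k).choose i : E) = 0 := by
      rw [CharP.cast_eq_zero_iff E p]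
      exact Nat.Prime.dvd_choose_pow hp.out hne (by omega)
    rw [hz]
    simp
  rw [hmid]
  have hc1 : ((-1 : E) ^ (p ^ k + 0) * ((p ^ k).choose 0 : E)) = -1 := by
    simp [neg_one_pow_char_pow E p]
  have hc2 : ((-1 : E) ^ (p ^ k + p ^ k) * ((p ^ k).choose (p ^ k) : E)) = 1 := by
    rw [Nat.choose_self]
    rw [← two_mul, pow_mul]
    simp
  rw [hc1, hc2]
  have hcast : ((p ^ k : ℕ) : ℤ_[p]) = (p : ℤ_[p]) ^ k := by push_cast; ring
  rw [hcast]
  simp only [Nat.cast_zero, add_zero, neg_one_smul, one_smul]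
  abel

include E in
lemma mahler_eval_nat (f : ℤ_[p] → M) (k : ℕ) :
    f (k : ℤ_[p]) = ∑ n ∈ range (k + 1), (k.choose n : E) • (fwdDiff (1 : ℤ_[p]))^[n] f 0 := by
  have h := shift_eq_sum_fwdDiff_iter (1 : ℤ_[p]) f k 0
  have h1 : (0 : ℤ_[p]) + k • (1 : ℤ_[p]) = (k : ℤ_[p]) := by simp
  rw [h1] at h
  rw [h]
  apply Finset.sum_congr rfl
  intro n _
  rw [← Nat.cast_smul_eq_nsmul E]

end FwdDiff

/-- Mahler's theorem in characteristic `p`: every continuous `f : ℤ_p → M` has a unique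
Mahler expansion `f z = ∑ C(z,n) • m n` with `m n → 0`, and the coefficients are given by
`m n = (-1)^n ∑_{i=0}^n (-1)^i C(n,i) f(i)`. -/
theorem mahler_expansion_exists_unique
    {p : ℕ} [Fact p.Prime] {E : Type*} [Field E] [CharP E p]
    {M : Type*} [AddCommGroup M] [Module E M]
    [UniformSpace M] [IsUniformAddGroup M] [CompleteSpace M] [T2Space M]
    (v : M → EReal)
    (hv_top : ∀ x : M, v x = ⊤ ↔ x = 0)
    (hv_smul : ∀ (c : E) (x : M), c ≠ 0 → v (c • x) = v x)
    (hv_add : ∀ x y : M, min (v x) (v y) ≤ v (x + y))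
    (hnhds : ∀ s : Set M, s ∈ 𝓝 (0 : M) ↔ ∃ r : ℝ, ∀ x : M, (r : EReal) ≤ v x → x ∈ s)
    (f : ℤ_[p] → M) (hf : Continuous f) :
    (∃! m : ℕ → M, Tendsto m atTop (𝓝 0) ∧
      ∀ z : ℤ_[p], HasSum (fun n => binomMod p E z n • m n) (f z)) ∧
    (∀ m : ℕ → M, (Tendsto m atTop (𝓝 0) ∧
        ∀ z : ℤ_[p], HasSum (fun n => binomMod p E z n • m n) (f z)) →
      ∀ n : ℕ, m n = (-1 : E) ^ n •
        ∑ i ∈ Finset.range (n + 1), ((-1 : E) ^ i * (n.choose i : E)) • f (i : ℤ_[p])) := by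
  classical
  have hp : Fact p.Prime := inferInstance
  have hE1 : (-1 : E) ≠ 0 := by
    intro h
    exact one_ne_zero (neg_eq_zero.mp h)
  have hvneg : ∀ x : M, v (-x) = v x := fun x => by
    rw [← neg_one_smul E x, hv_smul _ _ hE1]
  have hv0 : v (0 : M) = ⊤ := (hv_top 0).mpr rfl
  -- the "valuation ≥ r" additive subgroups
  set S : ℝ → AddSubgroup M := fun r =>
    { carrier := {x | (r : EReal) ≤ v x}
      zero_mem' := by simp only [Set.mem_setOf_eq, hv0]; exact le_top
      add_mem' := fun {a b} ha hb => le_trans (le_min ha hb) (hv_add a b)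
      neg_mem' := fun {a} ha => by simpa only [Set.mem_setOf_eq, hvneg] using ha } with hSdef
  have hS_mem : ∀ (r : ℝ) (x : M), x ∈ S r ↔ (r : EReal) ≤ v x := fun r x => Iff.rfl
  have hS_nhds : ∀ r : ℝ, (S r : Set M) ∈ 𝓝 (0 : M) := fun r =>
    (hnhds _).mpr ⟨r, fun x hx => hx⟩
  have hS_closed : ∀ r : ℝ, IsClosed (S r : Set M) := fun r =>
    AddSubgroup.isClosed_of_isOpen _ (AddSubgroup.isOpen_of_mem_nhds _ (hS_nhds r))
  have hS_smul : ∀ (r : ℝ) (c : E) (x : M), x ∈ S r → c • x ∈ S r := by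
    intro r c x hx
    rcases eq_or_ne c 0 with rfl | hc
    · rw [zero_smul]; exact (S r).zero_mem
    · rw [hS_mem, hv_smul c x hc]; exact hx
  -- tendsto criteria
  have htend : ∀ u : ℕ → M, (∀ r : ℝ, ∃ N, ∀ n ≥ N, u n ∈ S r) → Tendsto u atTop (𝓝 0) := by
    intro u hu
    rw [Filter.tendsto_atTop']
    intro s hs
    obtain ⟨r, hr⟩ := (hnhds s).mp hs
    obtain ⟨N, hN⟩ := hu r
    exact ⟨N, fun n hn => hr _ (hN n hn)⟩
  have htend' : ∀ u : ℕ → M, Tendsto u atTop (𝓝 0) → ∀ r : ℝ, ∃ N, ∀ n ≥ N, u n ∈ S r := by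
    intro u hu r
    rw [Filter.tendsto_atTop'] at hu
    exact hu _ (hS_nhds r)
  -- uniform continuity
  have hUC : ∀ r : ℝ, ∃ k : ℕ, ∀ z w : ℤ_[p],
      z - w ∈ Ideal.span {(p : ℤ_[p]) ^ k} → f z - f w ∈ S r := by
    intro r
    have huc : UniformContinuous f := CompactSpace.uniformContinuous_of_continuous hf
    have hV : {q : M × M | q.2 - q.1 ∈ S r} ∈ 𝓤 M := by
      rw [uniformity_eq_comap_nhds_zero M]
      exact Filter.preimage_mem_comap (hS_nhds r)
    have hW := huc hV
    rw [Filter.mem_map, Metric.mem_uniformity_dist] at hW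
    obtain ⟨ε, hε, hWd⟩ := hW
    have hplt : (p : ℝ)⁻¹ < 1 := by
      rw [inv_lt_one_iff₀]
      right
      exact_mod_cast hp.out.one_lt
    obtain ⟨k, hk⟩ := exists_pow_lt_of_lt_one hε hplt
    refine ⟨k, fun z w hzw => ?_⟩
    have hdist : dist w z < ε := by
      rw [dist_eq_norm]
      calc ‖w - z‖ = ‖z - w‖ := by rw [← norm_neg]; congr 1; ring
        _ ≤ (p : ℝ) ^ (-(k : ℤ)) := (PadicInt.norm_le_pow_iff_mem_span_pow _ k).mpr hzw
        _ = (p : ℝ)⁻¹ ^ k := by rw [zpow_neg, inv_pow, zpow_natCast]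
        _ < ε := hk
    exact hWd hdist
  -- the coefficient sequence
  set Df : ℕ → M := fun n => (fwdDiff (1 : ℤ_[p]))^[n] f 0 with hDfdef
  -- decay of coefficients
  have hdecay : ∀ r : ℝ, ∃ N, ∀ n ≥ N, Df n ∈ S r := by
    intro r
    obtain ⟨k, hk⟩ := hUC r
    refine ⟨p ^ k, fun n hn => ?_⟩
    set g : ℤ_[p] → M := fun z => f (z + (p : ℤ_[p]) ^ k) - f z with hgdef
    have hgmem : ∀ z : ℤ_[p], g z ∈ S r := by
      intro z
      apply hk
      have : z + (p : ℤ_[p]) ^ k - z = (p : ℤ_[p]) ^ k := by ring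
      rw [this]
      exact Ideal.mem_span_singleton_self _
    have hsplit : Df n = (fwdDiff (1 : ℤ_[p]))^[n - p ^ k] ((fwdDiff (1 : ℤ_[p]))^[p ^ k] f) 0 := by
      rw [hDfdef, ← Function.iterate_add_apply]
      congr 2
      omega
    have hcollapse : (fwdDiff (1 : ℤ_[p]))^[p ^ k] f = g :=
      funext fun z => mahler_fwdDiff_pow_char (E := E) f k z
    rw [hsplit, hcollapse, mahler_iter_fwdDiff (E := E)]
    exact AddSubgroup.sum_mem _ fun i _ => hS_smul r _ _ (hgmem _)
  have hDft : Tendsto Df atTop (𝓝 0) := htend Df hdecay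
  -- finite-sum HasSum at natural points
  have hfinsum : ∀ (m : ℕ → M) (k : ℕ),
      HasSum (fun n => binomMod p E (k : ℤ_[p]) n • m n)
        (∑ n ∈ range (k + 1), (k.choose n : E) • m n) := by
    intro m k
    have h0 : ∀ n ∉ range (k + 1), binomMod p E (k : ℤ_[p]) n • m n = 0 := by
      intro n hn
      simp only [mem_range, not_lt] at hn
      rw [binomMod_natCast, Nat.choose_eq_zero_of_lt (by omega), Nat.cast_zero, zero_smul]
    have h1 := hasSum_sum_of_ne_finset_zero (L := SummationFilter.unconditional ℕ) h0
    have h2 : ∑ n ∈ range (k + 1), binomMod p E (k : ℤ_[p]) n • m n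
        = ∑ n ∈ range (k + 1), (k.choose n : E) • m n := by
      apply Finset.sum_congr rfl
      intro n _
      rw [binomMod_natCast]
    rwa [h2] at h1
  -- summability
  have hsummable : ∀ m : ℕ → M, Tendsto m atTop (𝓝 0) → ∀ z : ℤ_[p],
      Summable (fun n => binomMod p E z n • m n) := by
    intro m hm z
    rw [summable_iff_vanishing]
    intro e he
    obtain ⟨r, hr⟩ := (hnhds e).mp he
    obtain ⟨N, hN⟩ := htend' m hm r
    refine ⟨range N, fun t ht => ?_⟩
    apply hr
    apply AddSubgroup.sum_mem (S r)
    intro n hn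
    have hnN : N ≤ n := by
      by_contra hcon
      exact (Finset.disjoint_left.mp ht hn) (mem_range.mpr (by omega))
    exact hS_smul r _ _ (hN n hnN)
  -- limits of sums of members stay in S r
  have htsum_mem : ∀ (a : ℕ → M) (x : M) (r : ℝ), HasSum a x → (∀ n, a n ∈ S r) → x ∈ S r := by
    intro a x r hx ha
    have hall : ∀ s : Finset ℕ, ∑ n ∈ s, a n ∈ S r :=
      fun s => AddSubgroup.sum_mem _ fun n _ => ha n
    exact (hS_closed r).mem_of_tendsto hx (Filter.Eventually.of_forall hall)
  -- the main HasSum statement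
  have hhs : ∀ z : ℤ_[p], HasSum (fun n => binomMod p E z n • Df n) (f z) := by
    intro z
    obtain ⟨Sz, hSz⟩ := hsummable Df hDft z
    suffices hfz : f z = Sz by rwa [hfz]
    have key : ∀ r : ℝ, f z - Sz ∈ S r := by
      intro r
      obtain ⟨k, hk⟩ := hUC r
      obtain ⟨N, hN⟩ := hdecay r
      set K := max k N with hKdef
      set a := z.appr K with hadef
      have hza : z - (a : ℤ_[p]) ∈ Ideal.span {(p : ℤ_[p]) ^ K} := PadicInt.appr_spec K z
      -- piece 1
      have h1 : f z - f (a : ℤ_[p]) ∈ S r := by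
        apply hk
        refine Ideal.span_singleton_le_span_singleton.mpr ?_ hza
        exact pow_dvd_pow _ (le_max_left _ _)
      -- piece 2
      set Q := ∑ n ∈ range N, binomMod p E z n • Df n with hQdef
      have hbinom_eq : ∀ n < N, binomMod p E z n = (a.choose n : E) := by
        intro n hn
        apply binomMod_eq_choose
        refine Ideal.span_singleton_le_span_singleton.mpr ?_ hza
        exact pow_dvd_pow _ (by omega : n + 1 ≤ K)
      have h2 : f (a : ℤ_[p]) - Q ∈ S r := by
        set L := max (a + 1) N with hLdef
        have hext : f (a : ℤ_[p]) = ∑ n ∈ range L, (a.choose n : E) • Df n := by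
          rw [mahler_eval_nat (E := E) f a]
          apply Finset.sum_subset (Finset.range_subset_range.mpr (le_max_left _ _))
          intro n _ hn
          simp only [mem_range, not_lt] at hn
          rw [Nat.choose_eq_zero_of_lt (by omega), Nat.cast_zero, zero_smul]
        have hQ : Q = ∑ n ∈ range N, (a.choose n : E) • Df n := by
          apply Finset.sum_congr rfl
          intro n hn
          rw [hbinom_eq n (mem_range.mp hn)]
        rw [hext, hQ, ← Finset.sum_sdiff_eq_sub (Finset.range_subset_range.mpr (le_max_right _ _))]
        apply AddSubgroup.sum_mem
        intro n hn
        have hnN : N ≤ n := by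
          have := Finset.mem_sdiff.mp hn
          simp only [mem_range, not_lt] at this
          exact this.2
        exact hS_smul r _ _ (hN n hnN)
      -- piece 3
      have h3 : Q - Sz ∈ S r := by
        have hQs : HasSum (fun n => if n ∈ range N then binomMod p E z n • Df n else 0) Q := by
          have h0 : ∀ n ∉ range N,
              (if n ∈ range N then binomMod p E z n • Df n else 0) = 0 := by
            intro n hn; rw [if_neg hn]
          have h1 := hasSum_sum_of_ne_finset_zero (L := SummationFilter.unconditional ℕ) h0
          have h2 : ∑ n ∈ range N, (if n ∈ range N then binomMod p E z n • Df n else 0) = Q := by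
            apply Finset.sum_congr rfl
            intro n hn
            rw [if_pos hn]
          rwa [h2] at h1
        have hsub := hQs.sub hSz
        apply htsum_mem _ _ r hsub
        intro n
        by_cases hn : n ∈ range N
        · rw [if_pos hn, sub_self]
          exact (S r).zero_mem
        · rw [if_neg hn, zero_sub]
          apply (S r).neg_mem
          have hnN : N ≤ n := by simpa only [mem_range, not_lt] using hn
          exact hS_smul r _ _ (hN n hnN)
      have htot := (S r).add_mem ((S r).add_mem h1 h2) h3
      have heq : f z - f (a : ℤ_[p]) + (f (a : ℤ_[p]) - Q) + (Q - Sz) = f z - Sz := by abel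
      rwa [heq] at htot
    have hvtop : v (f z - Sz) = ⊤ := by
      rw [EReal.eq_top_iff_forall_lt]
      intro y
      calc (y : EReal) < ((y + 1 : ℝ) : EReal) := by exact_mod_cast lt_add_one y
        _ ≤ v (f z - Sz) := key (y + 1)
    exact sub_eq_zero.mp ((hv_top _).mp hvtop)
  -- the formula for coefficients of any valid expansion
  have hformula : ∀ m : ℕ → M,
      (∀ z : ℤ_[p], HasSum (fun n => binomMod p E z n • m n) (f z)) →
      ∀ n : ℕ, m n = (-1 : E) ^ n •
        ∑ i ∈ Finset.range (n + 1), ((-1 : E) ^ i * (n.choose i : E)) • f (i : ℤ_[p]) := by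
    intro m hm n
    have hg : ∀ k : ℕ, f (k : ℤ_[p]) = ∑ j ∈ range (k + 1), (k.choose j : E) • m j := by
      intro k
      exact (hm (k : ℤ_[p])).unique (hfinsum m k)
    have hinv := mahler_inv_backward (E := E) m (fun k => f (k : ℤ_[p])) hg n
    rw [← hinv, Finset.smul_sum]
    apply Finset.sum_congr rfl
    intro i _
    rw [smul_smul, pow_add, mul_assoc]
  -- the statement's explicit coefficient sequence agrees with Df
  have hDf_eq : ∀ n : ℕ, Df n = (-1 : E) ^ n •
      ∑ i ∈ Finset.range (n + 1), ((-1 : E) ^ i * (n.choose i : E)) • f (i : ℤ_[p]) :=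
    hformula Df hhs
  constructor
  · refine ⟨Df, ⟨hDft, hhs⟩, ?_⟩
    intro y hy
    funext n
    rw [hformula y hy.2 n, ← hDf_eq n]
  · intro m hm n
    exact hformula m hm.2 n
end

section
/- Let f : Z_p → M be continuous with Mahler coefficients m_n(f). Fix λ, μ ∈ R. Then f satisfies val_M(f(x)-f(y)) ≥ p^λ·p^i + μ whenever val_p(x-y) ≥ i (for all x,y ∈ Z_p and i ≥ 0) if and only if for all i ≥ 0 and all n ≥ p^i one has val_M(m_n(f)) ≥ p^λ·p^i + μ. -/
open Filter Topology

section Aux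
open Finset fwdDiff

variable {p : ℕ} [hp : Fact p.Prime]

private lemma aux_lt_pow_of_le {n m : ℕ} (h : n ≤ m) : n < p ^ m :=
  lt_of_lt_of_le (Nat.lt_pow_self (n := n) hp.out.one_lt)
    (Nat.pow_le_pow_right hp.out.pos h)

/-- Lucas-type congruence: if `a ≡ b [MOD p^j]` and `n < p^j` then
`C(a,n) ≡ C(b,n) [MOD p]`. -/
private lemma choose_congr_zmod : ∀ (j a b n : ℕ), n < p ^ j →
    (a : ZMod (p ^ j)) = (b : ZMod (p ^ j)) →
    ((a.choose n : ZMod p)) = (b.choose n : ZMod p) := by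
  intro j
  induction j with
  | zero =>
    intro a b n hn _
    rw [pow_zero, Nat.lt_one_iff] at hn
    subst hn
    simp
  | succ j ih =>
    intro a b n hn hab
    rw [ZMod.natCast_eq_natCast_iff] at hab
    have hmod : a % p ^ (j + 1) = b % p ^ (j + 1) := hab
    have h1 : a % p = b % p := by
      rw [← Nat.mod_mod_of_dvd a (dvd_pow_self p (Nat.succ_ne_zero j)),
        ← Nat.mod_mod_of_dvd b (dvd_pow_self p (Nat.succ_ne_zero j)), hmod]
    have h2 : ((a / p : ℕ) : ZMod (p ^ j)) = ((b / p : ℕ) : ZMod (p ^ j)) := by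
      rw [ZMod.natCast_eq_natCast_iff]
      show a / p % p ^ j = b / p % p ^ j
      rw [← Nat.mod_mul_right_div_self, ← Nat.mod_mul_right_div_self,
        show p * p ^ j = p ^ (j + 1) by rw [pow_succ, mul_comm], hmod]
    have hn' : n / p < p ^ j := Nat.div_lt_of_lt_mul (by rw [mul_comm, ← pow_succ]; exact hn)
    have la := (ZMod.natCast_eq_natCast_iff _ _ _).mpr
      (Choose.choose_modEq_choose_mod_mul_choose_div_nat (p := p) (n := a) (k := n))
    have lb := (ZMod.natCast_eq_natCast_iff _ _ _).mpr
      (Choose.choose_modEq_choose_mod_mul_choose_div_nat (p := p) (n := b) (k := n))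
    rw [la, lb]
    push_cast
    rw [h1, ih _ _ _ hn' h2]

private lemma cast_eq_of_pow_dvd {k a b : ℕ} (h : ((p : ℤ_[p]) ^ k) ∣ ((a : ℤ_[p]) - b)) :
    (a : ZMod (p ^ k)) = (b : ZMod (p ^ k)) := by
  have hker : ((a : ℤ_[p]) - b) ∈ RingHom.ker (PadicInt.toZModPow k) := by
    rw [PadicInt.ker_toZModPow, Ideal.mem_span_singleton]
    exact h
  rw [RingHom.mem_ker, map_sub, map_natCast, map_natCast, sub_eq_zero] at hker
  exact hker

/-- `binomMod` can be computed from any natural number congruent to `z` mod `p^j`, `n < p^j`. -/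
private lemma binomMod_eq (E : Type*) [Field E] [CharP E p] {j n : ℕ} (hn : n < p ^ j)
    {z : ℤ_[p]} {a : ℕ} (h : ((p : ℤ_[p]) ^ j) ∣ (z - a)) :
    binomMod p E z n = ZMod.castHom dvd_rfl E ((a.choose n : ZMod p)) := by
  set b := z.appr (n + 1) with hb
  have hbd : ((p : ℤ_[p]) ^ (n + 1)) ∣ (z - b) :=
    Ideal.mem_span_singleton.mp (PadicInt.appr_spec (n + 1) z)
  set k := min j (n + 1) with hk
  have h1 : ((p : ℤ_[p]) ^ k) ∣ ((a : ℤ_[p]) - b) := by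
    have d1 : ((p : ℤ_[p]) ^ k) ∣ (z - b) :=
      (pow_dvd_pow _ (min_le_right j (n + 1))).trans hbd
    have d2 : ((p : ℤ_[p]) ^ k) ∣ (z - a) :=
      (pow_dvd_pow _ (min_le_left j (n + 1))).trans h
    have hd := dvd_sub d1 d2
    rwa [show (z - b) - (z - (a : ℤ_[p])) = (a : ℤ_[p]) - b by ring] at hd
  have h2 : (a : ZMod (p ^ k)) = (b : ZMod (p ^ k)) := cast_eq_of_pow_dvd h1
  have hnk : n < p ^ k := by
    rcases min_cases j (n + 1) with ⟨he, _⟩ | ⟨he, _⟩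
    · rw [hk, he]; exact hn
    · rw [hk, he]; exact aux_lt_pow_of_le (Nat.le_succ n)
  unfold binomMod
  rw [← hb, choose_congr_zmod k b a n hnk h2.symm]

private lemma binomMod_zero_right (E : Type*) [Field E] [CharP E p] (z : ℤ_[p]) :
    binomMod p E z 0 = 1 := by
  unfold binomMod
  simp

private lemma binomMod_zero_left (E : Type*) [Field E] [CharP E p] {n : ℕ} (hn : n ≠ 0) :
    binomMod p E 0 n = 0 := by
  rw [binomMod_eq E (j := n + 1) (aux_lt_pow_of_le (Nat.le_succ n)) (a := 0) (by simp)]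
  rw [Nat.choose_eq_zero_of_lt (Nat.pos_of_ne_zero hn)]
  simp

private lemma binomMod_congr (E : Type*) [Field E] [CharP E p] {i n : ℕ} {x y : ℤ_[p]}
    (hxy : ((p : ℤ_[p]) ^ i) ∣ (x - y)) (hn : n < p ^ i) :
    binomMod p E x n = binomMod p E y n := by
  set a := x.appr i with ha
  have hxa : ((p : ℤ_[p]) ^ i) ∣ (x - a) := Ideal.mem_span_singleton.mp (PadicInt.appr_spec i x)
  have hya : ((p : ℤ_[p]) ^ i) ∣ (y - a) := by
    have := dvd_sub hxa hxy
    simpa [sub_sub_sub_cancel_left] using this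
  rw [binomMod_eq E hn hxa, binomMod_eq E hn hya]

private lemma binomMod_pascal (E : Type*) [Field E] [CharP E p] (z : ℤ_[p]) (n : ℕ) :
    binomMod p E (z + 1) (n + 1) = binomMod p E z (n + 1) + binomMod p E z n := by
  set a := z.appr (n + 2) with ha
  have hza : ((p : ℤ_[p]) ^ (n + 2)) ∣ (z - a) :=
    Ideal.mem_span_singleton.mp (PadicInt.appr_spec (n + 2) z)
  have hza' : ((p : ℤ_[p]) ^ (n + 2)) ∣ ((z + 1) - ((a + 1 : ℕ) : ℤ_[p])) := by
    have : (z + 1) - ((a + 1 : ℕ) : ℤ_[p]) = z - a := by push_cast; ring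
    rw [this]; exact hza
  rw [binomMod_eq E (j := n + 2) (aux_lt_pow_of_le (by omega)) hza',
    binomMod_eq E (j := n + 2) (aux_lt_pow_of_le (by omega)) hza,
    binomMod_eq E (j := n + 2) (aux_lt_pow_of_le (by omega)) hza]
  rw [Nat.choose_succ_succ]
  push_cast
  rw [map_add, add_comm]

end Aux

section ValAux

variable {M : Type*} [AddCommGroup M]

private lemma v_sum_ge (v : M → EReal) (hv_top : v (0 : M) = ⊤)
    (hv_add : ∀ x y : M, min (v x) (v y) ≤ v (x + y))
    {ι : Type*} (s : Finset ι) (g : ι → M) (c : EReal)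
    (h : ∀ i ∈ s, c ≤ v (g i)) : c ≤ v (∑ i ∈ s, g i) := by
  classical
  induction s using Finset.induction_on with
  | empty => simpa [hv_top] using le_top
  | @insert a s hx ih =>
    rw [Finset.sum_insert hx]
    refine le_trans (le_min (h a (Finset.mem_insert_self a s)) (ih ?_)) (hv_add _ _)
    exact fun i hi => h i (Finset.mem_insert_of_mem hi)

private lemma v_ge_of_hasSum [UniformSpace M] [IsUniformAddGroup M]
    (v : M → EReal) (hv_top : v (0 : M) = ⊤)
    (hv_neg : ∀ x : M, v (-x) = v x)
    (hv_add : ∀ x y : M, min (v x) (v y) ≤ v (x + y))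
    (hnhds : ∀ s : Set M, s ∈ 𝓝 (0 : M) ↔ ∃ r : ℝ, ∀ x : M, (r : EReal) ≤ v x → x ∈ s)
    (c : ℝ) {g : ℕ → M} {a : M} (hg : HasSum g a)
    (h : ∀ n, (c : EReal) ≤ v (g n)) : (c : EReal) ≤ v a := by
  have hS : IsClosed {x : M | (c : EReal) ≤ v x} := by
    rw [← isOpen_compl_iff, isOpen_iff_mem_nhds]
    intro x hx
    have hU : {z : M | (c : EReal) ≤ v z} ∈ 𝓝 (0 : M) := (hnhds _).mpr ⟨c, fun _ hz => hz⟩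
    have hcont : Continuous fun y : M => y - x := continuous_id.sub continuous_const
    have hmem : {y : M | (c : EReal) ≤ v (y - x)} ∈ 𝓝 x := by
      have := hcont.continuousAt (x := x) |>.preimage_mem_nhds (by simpa using hU)
      simpa using this
    filter_upwards [hmem] with y hy hy'
    apply hx
    have h1 : min (v y) (v (x - y)) ≤ v (y + (x - y)) := hv_add _ _
    rw [add_sub_cancel] at h1
    have h2 : (c : EReal) ≤ v (x - y) := by rw [← neg_sub y x, hv_neg]; exact hy
    exact le_trans (le_min hy' h2) h1
  exact hS.mem_of_tendsto hg (Filter.Eventually.of_forall fun s =>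
    v_sum_ge v hv_top hv_add s g c fun i _ => h i)

end ValAux


open fwdDiff
/-- Amice-type characterization of super-Hölder functions via Mahler coefficients:
`f ∈ H^{λ,μ}(ℤ_p, M)` iff `val (m_n(f)) ≥ p^λ p^i + μ` whenever `n ≥ p^i`. -/
theorem superHolder_iff_mahler_coeffs
    {p : ℕ} [Fact p.Prime] {E : Type*} [Field E] [CharP E p]
    {M : Type*} [AddCommGroup M] [Module E M]
    [UniformSpace M] [IsUniformAddGroup M] [CompleteSpace M] [T2Space M]
    (v : M → EReal)
    (hv_top : ∀ x : M, v x = ⊤ ↔ x = 0)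
    (hv_smul : ∀ (c : E) (x : M), c ≠ 0 → v (c • x) = v x)
    (hv_add : ∀ x y : M, min (v x) (v y) ≤ v (x + y))
    (hnhds : ∀ s : Set M, s ∈ 𝓝 (0 : M) ↔ ∃ r : ℝ, ∀ x : M, (r : EReal) ≤ v x → x ∈ s)
    (lam mu : ℝ)
    (f : ℤ_[p] → M) (hf : Continuous f)
    (m : ℕ → M) (hm : Tendsto m atTop (𝓝 0))
    (hmf : ∀ z : ℤ_[p], HasSum (fun n => binomMod p E z n • m n) (f z)) :
    (∀ (i : ℕ) (x y : ℤ_[p]), (p : ℤ_[p]) ^ i ∣ (x - y) →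
        (((p : ℝ) ^ (lam + (i : ℝ)) + mu : ℝ) : EReal) ≤ v (f x - f y)) ↔
    (∀ i n : ℕ, p ^ i ≤ n →
        (((p : ℝ) ^ (lam + (i : ℝ)) + mu : ℝ) : EReal) ≤ v (m n)) := by
  have hp : p.Prime := Fact.out
  have hv_zero : v (0 : M) = ⊤ := (hv_top 0).mpr rfl
  have hv_neg : ∀ x : M, v (-x) = v x := by
    intro x
    rw [← neg_one_smul E x]
    exact hv_smul _ _ (by simp)
  -- Mahler coefficients of iterated forward differences
  have key : ∀ (n : ℕ) (z : ℤ_[p]),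
      HasSum (fun j => binomMod p E z j • m (j + n)) ((Δ_[1])^[n] f z) := by
    intro n
    induction n with
    | zero => intro z; simpa using hmf z
    | succ n ih =>
      intro z
      have h1 := (ih (z + 1)).sub (ih z)
      simp_rw [← sub_smul] at h1
      set g : ℕ → M := fun j => (binomMod p E (z + 1) j - binomMod p E z j) • m (j + n)
        with hgdef
      have hg0 : g 0 = 0 := by
        simp [hgdef, binomMod_zero_right]
      have h2 : HasSum (fun j => g (j + 1)) ((Δ_[1])^[n] f (z + 1) - (Δ_[1])^[n] f z) := by
        rw [hasSum_nat_add_iff 1]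
        simpa [hg0] using h1
      have h3 : (fun j => g (j + 1)) = fun j => binomMod p E z j • m (j + (n + 1)) := by
        funext j
        simp only [hgdef]
        rw [binomMod_pascal, add_sub_cancel_left, show j + 1 + n = j + (n + 1) from by omega]
      have h4 : (Δ_[1])^[n + 1] f z = (Δ_[1])^[n] f (z + 1) - (Δ_[1])^[n] f z := by
        rw [Function.iterate_succ_apply']
        rfl
      rw [h4, ← h3]
      exact h2
  have hmval : ∀ n : ℕ, m n = (Δ_[1])^[n] f 0 := by
    intro n
    have h1 := key n 0
    have h2 : HasSum (fun j => binomMod p E (0 : ℤ_[p]) j • m (j + n)) (m n) := by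
      have := hasSum_single (f := fun j => binomMod p E (0 : ℤ_[p]) j • m (j + n)) 0
        (fun j hj => by simp [binomMod_zero_left E hj])
      simpa [binomMod_zero_right] using this
    exact h2.unique h1
  -- the `p^i`-th forward difference is a shifted difference
  have hstep : ∀ (i : ℕ) (z : ℤ_[p]), (Δ_[1])^[p ^ i] f z = f (z + (p : ℤ_[p]) ^ i) - f z := by
    intro i z
    rw [fwdDiff_iter_eq_sum_shift, Finset.sum_range_succ]
    have hlast : (((-1 : ℤ)) ^ (p ^ i - p ^ i) * ((p ^ i).choose (p ^ i)) : ℤ) •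
        f (z + (p ^ i) • (1 : ℤ_[p])) = f (z + (p : ℤ_[p]) ^ i) := by
      rw [Nat.sub_self, pow_zero, Nat.choose_self]
      push_cast
      rw [one_smul]
      congr 1
      push_cast [nsmul_eq_mul]
      ring
    have hmid : ∑ k ∈ Finset.range (p ^ i),
        ((((-1 : ℤ)) ^ (p ^ i - k) * ((p ^ i).choose k) : ℤ)) • f (z + k • (1 : ℤ_[p]))
        = - f z := by
      rw [Finset.sum_eq_single 0]
      · rw [← Int.cast_smul_eq_zsmul E]
        push_cast
        rw [Nat.sub_zero, neg_one_pow_char_pow (R := E)]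
        simp
      · intro k hk hk0
        rw [← Int.cast_smul_eq_zsmul E]
        have hz : ((((-1 : ℤ)) ^ (p ^ i - k) * ((p ^ i).choose k) : ℤ) : E) = 0 := by
          rw [CharP.intCast_eq_zero_iff E p]
          exact Dvd.dvd.mul_left
            (Int.natCast_dvd_natCast.mpr
              (hp.dvd_choose_pow hk0 (Finset.mem_range.mp hk).ne)) _
        rw [hz, zero_smul]
      · intro h0
        exact absurd (Finset.mem_range.mpr (pow_pos hp.pos i)) h0
    rw [hmid, hlast, neg_add_eq_sub]
  constructor
  · -- super-Hölder ⇒ coefficient bounds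
    intro H i n hn
    obtain ⟨q, rfl⟩ : ∃ q, n = q + p ^ i := ⟨n - p ^ i, (Nat.sub_add_cancel hn).symm⟩
    rw [hmval, Function.iterate_add_apply, fwdDiff_iter_eq_sum_shift]
    apply v_sum_ge v hv_zero hv_add
    intro k _
    rw [← Int.cast_smul_eq_zsmul E]
    by_cases h0 : ((((-1 : ℤ)) ^ (q - k) * (q.choose k) : ℤ) : E) = 0
    · rw [h0, zero_smul, hv_zero]; exact le_top
    · rw [hv_smul _ _ h0, hstep]
      refine H i _ _ ?_
      have : ((0 : ℤ_[p]) + k • (1 : ℤ_[p]) + (p : ℤ_[p]) ^ i) - ((0 : ℤ_[p]) + k • (1 : ℤ_[p]))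
          = (p : ℤ_[p]) ^ i := by ring
      rw [this]
  · -- coefficient bounds ⇒ super-Hölder
    intro H i x y hxy
    have h1 : HasSum (fun n => (binomMod p E x n - binomMod p E y n) • m n) (f x - f y) := by
      have := (hmf x).sub (hmf y)
      simpa [sub_smul] using this
    apply v_ge_of_hasSum v hv_zero hv_neg hv_add hnhds _ h1
    intro n
    by_cases hn : n < p ^ i
    · rw [binomMod_congr E hxy hn, sub_self, zero_smul, hv_zero]; exact le_top
    · by_cases h0 : binomMod p E x n - binomMod p E y n = 0
      · rw [h0, zero_smul, hv_zero]; exact le_top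
      · rw [hv_smul _ _ h0]
        exact H i n (le_of_not_gt hn)
end

section
/- Let M be a complete valued E-vector space which is also a ring with val_M(mm') ≥ val_M(m)+val_M(m'). If f ∈ H^{λ,μ}(Z_p, M) takes values of valuation ≥ c and g ∈ H^{λ,ν}(Z_p, M) takes values of valuation ≥ d, then the product fg lies in H^{λ, min(μ+d, ν+c)}(Z_p, M) and takes values of valuation ≥ c+d. -/
open Filter Topology

/-- `f ∈ H^{λ,μ}(ℤ_p, M)`: the super-Hölder condition
`val (f x - f y) ≥ p^λ · p^i + μ` whenever `p^i ∣ x - y`. -/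
def SuperHolder (p : ℕ) [Fact p.Prime] {M : Type*} [AddCommGroup M]
    (v : M → EReal) (lam mu : ℝ) (f : ℤ_[p] → M) : Prop :=
  ∀ (i : ℕ) (x y : ℤ_[p]), (p : ℤ_[p]) ^ i ∣ (x - y) →
    (((p : ℝ) ^ (lam + (i : ℝ)) + mu : ℝ) : EReal) ≤ v (f x - f y)

/-- Products of super-Hölder functions with values of bounded valuation:
if `f ∈ H^{λ,μ}` with values of valuation `≥ c` and `g ∈ H^{λ,ν}` with values of
valuation `≥ d`, then `fg ∈ H^{λ, min(μ+d, ν+c)}` with values of valuation `≥ c+d`. -/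
theorem superHolder_mul
    {p : ℕ} [Fact p.Prime] {E : Type*} [Field E] [CharP E p]
    {M : Type*} [CommRing M] [Algebra E M]
    [UniformSpace M] [IsUniformAddGroup M] [CompleteSpace M] [T2Space M]
    (v : M → EReal)
    (hv_top : ∀ x : M, v x = ⊤ ↔ x = 0)
    (hv_smul : ∀ (c : E) (x : M), c ≠ 0 → v (c • x) = v x)
    (hv_add : ∀ x y : M, min (v x) (v y) ≤ v (x + y))
    (hv_mul : ∀ x y : M, v x + v y ≤ v (x * y))
    (hnhds : ∀ s : Set M, s ∈ 𝓝 (0 : M) ↔ ∃ r : ℝ, ∀ x : M, (r : EReal) ≤ v x → x ∈ s)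
    (lam mu nu c d : ℝ) (f g : ℤ_[p] → M)
    (hf : SuperHolder p v lam mu f) (hg : SuperHolder p v lam nu g)
    (hfc : ∀ x : ℤ_[p], (c : EReal) ≤ v (f x))
    (hgd : ∀ x : ℤ_[p], (d : EReal) ≤ v (g x)) :
    SuperHolder p v lam (min (mu + d) (nu + c)) (fun x => f x * g x) ∧
      ∀ x : ℤ_[p], ((c + d : ℝ) : EReal) ≤ v (f x * g x) := by
  constructor
  · intro i x y hxy
    have key : f x * g x - f y * g y = (f x - f y) * g x + f y * (g x - g y) := by ring
    simp only []
    rw [key]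
    refine le_trans ?_ (hv_add _ _)
    refine le_min ?_ ?_
    · calc (((p : ℝ) ^ (lam + (i : ℝ)) + min (mu + d) (nu + c) : ℝ) : EReal)
          ≤ (((p : ℝ) ^ (lam + (i : ℝ)) + mu + d : ℝ) : EReal) := by
            exact_mod_cast by linarith [min_le_left (mu + d) (nu + c)]
        _ = (((p : ℝ) ^ (lam + (i : ℝ)) + mu : ℝ) : EReal) + (d : EReal) := by
            rw [← EReal.coe_add]
        _ ≤ v (f x - f y) + v (g x) := add_le_add (hf i x y hxy) (hgd x)
        _ ≤ v ((f x - f y) * g x) := hv_mul _ _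
    · calc (((p : ℝ) ^ (lam + (i : ℝ)) + min (mu + d) (nu + c) : ℝ) : EReal)
          ≤ ((c + ((p : ℝ) ^ (lam + (i : ℝ)) + nu) : ℝ) : EReal) := by
            exact_mod_cast by linarith [min_le_right (mu + d) (nu + c)]
        _ = (c : EReal) + (((p : ℝ) ^ (lam + (i : ℝ)) + nu : ℝ) : EReal) := by
            rw [← EReal.coe_add]
        _ ≤ v (f y) + v (g x - g y) := add_le_add (hfc y) (hg i x y hxy)
        _ ≤ v (f y * (g x - g y)) := hv_mul _ _
  · intro x
    calc ((c + d : ℝ) : EReal) = (c : EReal) + (d : EReal) := EReal.coe_add c d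
      _ ≤ v (f x) + v (g x) := add_le_add (hfc x) (hgd x)
      _ ≤ v (f x * g x) := hv_mul _ _
end

section
/- Let E be a field of characteristic p and M = E[[X]] with the X-adic valuation. The function Z_p → M sending a to (1+X)^a (defined by the binomial series (1+X)^a = Σ_{n≥0} C(a,n) X^n with C(a,n) reduced mod p) lies in H^{0,0}(Z_p, M); that is, val_X((1+X)^a - (1+X)^b) ≥ p^i whenever val_p(a-b) ≥ i. -/
open PowerSeries

/-- If `m ≡ m' [MOD p^k]` and `n < p^k`, then `choose m n ≡ choose m' n [MOD p]`,
by Lucas's theorem. -/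
theorem choose_congr_of_modEq_aux {p : ℕ} [Fact p.Prime] {m m' n k : ℕ}
    (hmm : m ≡ m' [MOD p ^ k]) (hn : n < p ^ k) :
    (m.choose n : ZMod p) = (m'.choose n : ZMod p) := by
  have key : ∀ j < k, m / p ^ j % p = m' / p ^ j % p := by
    intro j hj
    have h1 : m / p ^ j % p = m % p ^ (j + 1) / p ^ j := by
      rw [← Nat.mod_mul_right_div_self, pow_succ]
    have h2 : m' / p ^ j % p = m' % p ^ (j + 1) / p ^ j := by
      rw [← Nat.mod_mul_right_div_self, pow_succ]
    have h3 : m % p ^ (j + 1) = m' % p ^ (j + 1) :=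
      (hmm.of_dvd (pow_dvd_pow p hj)).symm ▸ rfl
    rw [h1, h2, h3]
  have ha := Choose.choose_modEq_choose_mul_prod_range_choose (p := p) (n := m) (k := n) k
  have hb := Choose.choose_modEq_choose_mul_prod_range_choose (p := p) (n := m') (k := n) k
  have hnn : n / p ^ k = 0 := Nat.div_eq_of_lt hn
  rw [hnn] at ha hb
  have hprod : (∏ j ∈ Finset.range k, (m / p ^ j % p).choose (n / p ^ j % p)) =
      ∏ j ∈ Finset.range k, (m' / p ^ j % p).choose (n / p ^ j % p) :=
    Finset.prod_congr rfl fun j hj => by rw [key j (Finset.mem_range.mp hj)]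
  have heq : (m.choose n : ℤ) ≡ (m'.choose n : ℤ) [ZMOD p] := by
    refine ha.trans (Int.ModEq.trans ?_ hb.symm)
    rw [hprod, Nat.choose_zero_right, Nat.choose_zero_right]
  have := (ZMod.intCast_eq_intCast_iff _ _ _).mpr heq
  push_cast at this
  exact_mod_cast this

/-- The power series `(1+X)^a = ∑ C(a,n) X^n ∈ E[[X]]` for `a ∈ ℤ_p`. -/
noncomputable def onePlusXPow (p : ℕ) [Fact p.Prime] (E : Type*) [Field E] [CharP E p]
    (a : ℤ_[p]) : PowerSeries E :=
  PowerSeries.mk fun n => binomMod p E a n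

/-- The function `a ↦ (1+X)^a` lies in `H^{0,0}(ℤ_p, E[[X]])`:
`val_X ((1+X)^a - (1+X)^b) ≥ p^i` whenever `val_p (a-b) ≥ i`. -/
theorem onePlusXPow_superHolder
    {p : ℕ} [Fact p.Prime] {E : Type*} [Field E] [CharP E p]
    (i : ℕ) (a b : ℤ_[p]) (h : (p : ℤ_[p]) ^ i ∣ (a - b)) :
    (X : PowerSeries E) ^ (p ^ i) ∣ (onePlusXPow p E a - onePlusXPow p E b) := by
  rw [PowerSeries.X_pow_dvd_iff]
  intro m hm
  simp only [onePlusXPow, map_sub, coeff_mk, sub_eq_zero, binomMod]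
  congr 1
  set k := min (m + 1) i with hk
  have hka : (p : ℤ_[p]) ^ k ∣ a - a.appr (m + 1) := by
    have := PadicInt.appr_spec (m + 1) a
    rw [Ideal.mem_span_singleton] at this
    exact dvd_trans (pow_dvd_pow _ (min_le_left _ _)) this
  have hkb : (p : ℤ_[p]) ^ k ∣ b - b.appr (m + 1) := by
    have := PadicInt.appr_spec (m + 1) b
    rw [Ideal.mem_span_singleton] at this
    exact dvd_trans (pow_dvd_pow _ (min_le_left _ _)) this
  have hkab : (p : ℤ_[p]) ^ k ∣ a - b :=
    dvd_trans (pow_dvd_pow _ (min_le_right _ _)) h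
  have hdvd : (p : ℤ_[p]) ^ k ∣ ((b.appr (m + 1) : ℤ) - (a.appr (m + 1) : ℤ) : ℤ) := by
    have heq : (((b.appr (m + 1) : ℤ) - (a.appr (m + 1) : ℤ) : ℤ) : ℤ_[p]) =
        (a - (a.appr (m + 1) : ℤ_[p])) - (b - (b.appr (m + 1) : ℤ_[p])) - (a - b) := by
      push_cast; ring
    rw [heq]
    exact dvd_sub (dvd_sub hka hkb) hkab
  rw [PadicInt.pow_p_dvd_int_iff] at hdvd
  have hmod : a.appr (m + 1) ≡ b.appr (m + 1) [MOD p ^ k] := by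
    rw [Nat.modEq_iff_dvd]
    exact_mod_cast hdvd
  refine choose_congr_of_modEq_aux hmod ?_
  rcases le_total (m + 1) i with hle | hle
  · rw [hk, min_eq_left hle]
    calc m < p ^ m := Nat.lt_pow_self (n := m) (Fact.out : p.Prime).one_lt
    _ ≤ p ^ (m + 1) := Nat.pow_le_pow_right (Fact.out : p.Prime).pos (Nat.le_succ m)
  · rw [hk, min_eq_right hle]; exact hm
end

section
/- Let w(X) ∈ X + X²·F_p[[X]] be invertible (under composition) and nontorsion (w^{∘n}(X) ≠ X for all n ≥ 1), and let f(X) ∈ X·F_p[[X]] be separable (f'(X) ≠ 0). If w ∘ f = f ∘ w, then f is invertible under composition, i.e. f'(0) ∈ F_p^×. -/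
open PowerSeries

/-- Composition `f ∘ g` of power series (correct whenever `g` has zero constant term). -/
noncomputable def psComp {E : Type*} [CommRing E] (f g : PowerSeries E) : PowerSeries E :=
  PowerSeries.mk fun n =>
    ∑ j ∈ Finset.range (n + 1), PowerSeries.coeff j f * PowerSeries.coeff n (g ^ j)

namespace PsCompAux

variable {E : Type*} [CommRing E]

theorem coeff_psComp (f g : PowerSeries E) (n : ℕ) :
    coeff n (psComp f g) =
      ∑ j ∈ Finset.range (n + 1), coeff j f * coeff n (g ^ j) := by
  simp [psComp]

theorem coeff_pow_eq_zero {g : PowerSeries E} (hg : constantCoeff g = 0)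
    {n j : ℕ} (h : n < j) : coeff n (g ^ j) = 0 := by
  have : (X : PowerSeries E) ^ j ∣ g ^ j := pow_dvd_pow_of_dvd (X_dvd_iff.mpr hg) j
  exact X_pow_dvd_iff.mp this n h

theorem coeff_psComp_ext (f g : PowerSeries E) (hg : constantCoeff g = 0)
    {n N : ℕ} (hN : n < N) :
    coeff n (psComp f g) =
      ∑ j ∈ Finset.range N, coeff j f * coeff n (g ^ j) := by
  rw [coeff_psComp]
  apply Finset.sum_subset
  · exact Finset.range_subset_range.mpr hN
  · intro j _ hj
    rw [coeff_pow_eq_zero hg (by simpa using hj), mul_zero]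

theorem constantCoeff_psComp (f g : PowerSeries E) :
    constantCoeff (psComp f g) = constantCoeff f := by
  have := coeff_psComp f g 0
  simpa using this

theorem psComp_X_left (g : PowerSeries E) (hg : constantCoeff g = 0) :
    psComp X g = g := by
  ext n
  rw [coeff_psComp]
  rcases n with _ | n
  · simpa [coeff_X] using hg.symm
  · rw [Finset.sum_eq_single 1]
    · simp
    · intro j _ hj
      rw [coeff_X, if_neg hj]
      exact zero_mul _
    · intro h; simp at h

theorem psComp_X_right (f : PowerSeries E) : psComp f X = f := by
  ext n
  rw [coeff_psComp, Finset.sum_eq_single n]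
  · simp [coeff_X_pow]
  · intro j _ hj; simp [coeff_X_pow, Ne.symm hj]
  · intro h; simp at h

theorem psComp_one_left (g : PowerSeries E) : psComp 1 g = 1 := by
  ext n
  rw [coeff_psComp, Finset.sum_eq_single 0]
  · simp [coeff_one]
  · intro j _ hj; simp [coeff_one, hj]
  · intro h; simp at h

theorem psComp_add_left (a b g : PowerSeries E) :
    psComp (a + b) g = psComp a g + psComp b g := by
  ext n
  simp [coeff_psComp, add_mul, Finset.sum_add_distrib]


theorem psComp_mul_left (a b g : PowerSeries E) (hg : constantCoeff g = 0) :
    psComp (a * b) g = psComp a g * psComp b g := by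
  ext n
  have hdisj : ∀ x ∈ Finset.range (n+1), ∀ y ∈ Finset.range (n+1), x ≠ y →
      Disjoint (Finset.HasAntidiagonal.antidiagonal x) (Finset.HasAntidiagonal.antidiagonal y) := by
    intro x _ y _ hxy
    rw [Finset.disjoint_left]
    intro uv h1 h2
    exact hxy ((Finset.HasAntidiagonal.mem_antidiagonal.mp h1).symm.trans (Finset.HasAntidiagonal.mem_antidiagonal.mp h2))
  have hl : coeff n (psComp (a*b) g)
      = ∑ uv ∈ (Finset.range (n+1)).biUnion Finset.HasAntidiagonal.antidiagonal,
          coeff uv.1 a * coeff uv.2 b * coeff n (g ^ (uv.1 + uv.2)) := by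
    rw [coeff_psComp, Finset.sum_biUnion hdisj]
    refine Finset.sum_congr rfl fun j hj => ?_
    rw [coeff_mul, Finset.sum_mul]
    refine Finset.sum_congr rfl fun uv huv => ?_
    rw [Finset.HasAntidiagonal.mem_antidiagonal.mp huv]
  have hr : coeff n (psComp a g * psComp b g)
      = ∑ uv ∈ Finset.range (n+1) ×ˢ Finset.range (n+1),
          coeff uv.1 a * coeff uv.2 b * coeff n (g ^ (uv.1 + uv.2)) := by
    calc coeff n (psComp a g * psComp b g)
        = ∑ st ∈ Finset.HasAntidiagonal.antidiagonal n,
            (∑ u ∈ Finset.range (n+1), coeff u a * coeff st.1 (g^u)) *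
            (∑ v ∈ Finset.range (n+1), coeff v b * coeff st.2 (g^v)) := by
          rw [coeff_mul]
          refine Finset.sum_congr rfl fun st hst => ?_
          rw [coeff_psComp_ext a g hg (Nat.lt_succ_of_le (Finset.HasAntidiagonal.antidiagonal.fst_le hst)),
              coeff_psComp_ext b g hg (Nat.lt_succ_of_le (Finset.HasAntidiagonal.antidiagonal.snd_le hst))]
      _ = ∑ u ∈ Finset.range (n+1), ∑ v ∈ Finset.range (n+1),
            coeff u a * coeff v b *
              (∑ st ∈ Finset.HasAntidiagonal.antidiagonal n, coeff st.1 (g^u) * coeff st.2 (g^v)) := by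
          simp only [Finset.sum_mul_sum]
          rw [Finset.sum_comm]
          refine Finset.sum_congr rfl fun u _ => ?_
          rw [Finset.sum_comm]
          refine Finset.sum_congr rfl fun v _ => ?_
          rw [Finset.mul_sum]
          refine Finset.sum_congr rfl fun st _ => ?_
          ring
      _ = ∑ u ∈ Finset.range (n+1), ∑ v ∈ Finset.range (n+1),
            coeff u a * coeff v b * coeff n (g ^ (u + v)) := by
          refine Finset.sum_congr rfl fun u _ => Finset.sum_congr rfl fun v _ => ?_
          rw [← coeff_mul, ← pow_add]
      _ = ∑ uv ∈ Finset.range (n+1) ×ˢ Finset.range (n+1),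
            coeff uv.1 a * coeff uv.2 b * coeff n (g ^ (uv.1 + uv.2)) := by
          rw [Finset.sum_product]
  rw [hl, hr]
  refine Finset.sum_subset ?_ ?_
  · intro uv huv
    rcases Finset.mem_biUnion.mp huv with ⟨j, hj, hj2⟩
    have h2 := Finset.HasAntidiagonal.mem_antidiagonal.mp hj2
    simp only [Finset.mem_range] at hj
    simp only [Finset.mem_product, Finset.mem_range]
    omega
  · intro uv _ huv
    have : n < uv.1 + uv.2 := by
      by_contra h
      push_neg at h
      exact huv (Finset.mem_biUnion.mpr ⟨uv.1 + uv.2, Finset.mem_range.mpr (by omega),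
        Finset.HasAntidiagonal.mem_antidiagonal.mpr rfl⟩)
    rw [coeff_pow_eq_zero hg this, mul_zero]

theorem psComp_pow_left (a g : PowerSeries E) (hg : constantCoeff g = 0) (i : ℕ) :
    psComp (a ^ i) g = psComp a g ^ i := by
  induction i with
  | zero => simpa using psComp_one_left g
  | succ i ih => rw [pow_succ, pow_succ, psComp_mul_left _ _ _ hg, ih]

theorem psComp_assoc (a b c : PowerSeries E) (hb : constantCoeff b = 0)
    (hc : constantCoeff c = 0) :
    psComp (psComp a b) c = psComp a (psComp b c) := by
  ext n
  rw [coeff_psComp, coeff_psComp]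
  calc ∑ j ∈ Finset.range (n+1), coeff j (psComp a b) * coeff n (c ^ j)
      = ∑ j ∈ Finset.range (n+1), ∑ i ∈ Finset.range (n+1),
          coeff i a * coeff j (b ^ i) * coeff n (c ^ j) := by
        refine Finset.sum_congr rfl fun j hj => ?_
        rw [coeff_psComp_ext a b hb (Finset.mem_range.mp hj), Finset.sum_mul]
    _ = ∑ i ∈ Finset.range (n+1), coeff i a *
          ∑ j ∈ Finset.range (n+1), coeff j (b ^ i) * coeff n (c ^ j) := by
        rw [Finset.sum_comm]
        refine Finset.sum_congr rfl fun i _ => ?_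
        rw [Finset.mul_sum]
        refine Finset.sum_congr rfl fun j _ => ?_
        ring
    _ = ∑ i ∈ Finset.range (n+1), coeff i a * coeff n (psComp b c ^ i) := by
        refine Finset.sum_congr rfl fun i _ => ?_
        rw [← psComp_pow_left b c hc i, coeff_psComp]

theorem coeff_X_pow_mul_pow_eq_zero {u : PowerSeries E} {m : ℕ}
    (hu : ∀ s < m, coeff s u = 0) {a i t : ℕ} (ht : t < a + i * m) :
    coeff t ((X : PowerSeries E) ^ a * u ^ i) = 0 := by
  have h1 : (X : PowerSeries E) ^ m ∣ u := X_pow_dvd_iff.mpr hu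
  have h2 : (X : PowerSeries E) ^ (a + i * m) ∣ X ^ a * u ^ i := by
    rw [pow_add]
    exact mul_dvd_mul dvd_rfl (by rw [mul_comm i m, pow_mul]; exact pow_dvd_pow_of_dvd h1 i)
  exact X_pow_dvd_iff.mp h2 t ht

theorem coeff_add_pow_sub_pow {v : PowerSeries E} {m : ℕ} (hm : 1 ≤ m)
    (hv : ∀ s < m, coeff s v = 0) {j : ℕ} (hj : 1 ≤ j) {t : ℕ} (ht : t < j - 1 + m) :
    coeff t (((X : PowerSeries E) + v) ^ j - X ^ j) = 0 := by
  have hE : ((X : PowerSeries E) + v) ^ j - X ^ j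
      = ∑ k ∈ Finset.range j, (X : PowerSeries E) ^ k * v ^ (j - k) * (j.choose k : PowerSeries E) := by
    rw [add_pow, Finset.sum_range_succ]
    simp
  rw [hE, map_sum]
  refine Finset.sum_eq_zero fun k hk => ?_
  have hkj : k < j := Finset.mem_range.mp hk
  have hcast : (j.choose k : PowerSeries E) = PowerSeries.C ((j.choose k : ℕ) : E) := by
    simp
  rw [hcast, coeff_mul_C]
  have hz : coeff t ((X : PowerSeries E) ^ k * v ^ (j - k)) = 0 := by
    refine coeff_X_pow_mul_pow_eq_zero hv ?_
    have h3 : j - k - 1 ≤ m * (j - k - 1) := Nat.le_mul_of_pos_left _ (by omega)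
    have h4 : m * (j - k) = m * (j - k - 1) + m := by
      have h6 : j - k - 1 + 1 = j - k := by omega
      calc m * (j - k) = m * (j - k - 1 + 1) := by rw [h6]
        _ = m * (j - k - 1) + m := Nat.mul_succ _ _
    have h5 : (j - k) * m = m * (j - k) := Nat.mul_comm _ _
    omega
  rw [hz, zero_mul]

section Iter

variable {w : PowerSeries E} (hw0 : constantCoeff w = 0)

theorem constantCoeff_iter (n : ℕ) :
    constantCoeff ((fun h => psComp h w)^[n] (X : PowerSeries E)) = 0 := by
  induction n with
  | zero => simp
  | succ n ih =>
    rw [Function.iterate_succ_apply', constantCoeff_psComp]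
    exact ih

include hw0 in
theorem iterate_eq (n : ℕ) (g : PowerSeries E) :
    (fun h => psComp h w)^[n] g = psComp g ((fun h => psComp h w)^[n] X) := by
  induction n generalizing g with
  | zero => simp [psComp_X_right]
  | succ n ih =>
    rw [Function.iterate_succ_apply, Function.iterate_succ_apply]
    show (fun h => psComp h w)^[n] (psComp g w) = psComp g ((fun h => psComp h w)^[n] (psComp X w))
    rw [ih (psComp g w), ih (psComp X w), psComp_X_left w hw0,
      psComp_assoc g w _ hw0 (constantCoeff_iter n)]

include hw0 in
theorem comm_iter {f : PowerSeries E} (hf0 : constantCoeff f = 0)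
    (hcomm : psComp w f = psComp f w) (n : ℕ) :
    psComp f ((fun h => psComp h w)^[n] X) = psComp ((fun h => psComp h w)^[n] X) f := by
  induction n with
  | zero => simp [psComp_X_right, psComp_X_left f hf0]
  | succ n ih =>
    rw [Function.iterate_succ_apply']
    set V := (fun h => psComp h w)^[n] (X : PowerSeries E) with hV
    have hVc : constantCoeff V = 0 := constantCoeff_iter n
    calc psComp f (psComp V w) = psComp (psComp f V) w := (psComp_assoc f V w hVc hw0).symm
      _ = psComp (psComp V f) w := by rw [ih]
      _ = psComp V (psComp f w) := psComp_assoc V f w hf0 hw0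
      _ = psComp V (psComp w f) := by rw [hcomm]
      _ = psComp (psComp V w) f := (psComp_assoc V w f hw0 hf0).symm

end Iter

section Grow

variable {p : ℕ} [Fact p.Prime] {w : PowerSeries (ZMod p)}

theorem grow (hw0 : constantCoeff w = 0) (hw1 : coeff 1 w = 1)
    (M : ℕ) (hM : 2 ≤ M) :
    ∃ n, 1 ≤ n ∧ ∀ t < M,
      coeff t ((fun h => psComp h w)^[n] X - X) = 0 := by
  induction M, hM using Nat.le_induction with
  | base =>
    refine ⟨1, le_refl 1, ?_⟩
    intro t ht
    have h1 : (fun h => psComp h w)^[1] (X : PowerSeries (ZMod p)) = w := by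
      rw [Function.iterate_one]
      exact psComp_X_left w hw0
    rw [h1, map_sub]
    interval_cases t
    · simp [coeff_zero_eq_constantCoeff, hw0]
    · simp [hw1]
  | succ M hM2 ih =>
    obtain ⟨n, hn1, hord⟩ := ih
    set V := (fun h => psComp h w)^[n] (X : PowerSeries (ZMod p)) with hVdef
    set v := V - X with hvdef
    have hVc : constantCoeff V = 0 := constantCoeff_iter n
    have hXv : V = X + v := by rw [hvdef]; ring
    have key : ∀ k : ℕ, ∀ t, t < 2 * M - 1 →
        coeff t ((fun h => psComp h w)^[n * k] X - X)
          = (k : ZMod p) * coeff t v := by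
      intro k
      induction k with
      | zero => intro t ht; simp
      | succ k ihk =>
        intro t ht
        set A := (fun h => psComp h w)^[n * k] (X : PowerSeries (ZMod p)) with hA
        have hiter : (fun h => psComp h w)^[n * (k + 1)] (X : PowerSeries (ZMod p))
            = psComp A V := by
          have hnk : n * (k + 1) = n + n * k := by ring
          rw [hnk, Function.iterate_add_apply, ← hA, hVdef]
          exact iterate_eq hw0 n A
        have hAX : A = X + (A - X) := by ring
        have hsplit : psComp A V = V + psComp (A - X) V := by
          conv_lhs => rw [hAX]
          rw [psComp_add_left, psComp_X_left V hVc]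
        have e0 : (fun h => psComp h w)^[n * (k + 1)] X - X = v + psComp (A - X) V := by
          rw [hiter, hsplit, hvdef]; ring
        have haord : ∀ s, s < M → coeff s (A - X) = 0 := by
          intro s hs
          rw [ihk s (by omega), hord s hs, mul_zero]
        have e1 : coeff t (psComp (A - X) V) = coeff t (A - X) := by
          rw [coeff_psComp]
          have hcong : ∀ j ∈ Finset.range (t + 1),
              coeff j (A - X) * coeff t (V ^ j)
              = coeff j (A - X) * coeff t ((X : PowerSeries (ZMod p)) ^ j) := by
            intro j _
            rcases lt_or_ge j M with hjM | hjM
            · rw [haord j hjM, zero_mul, zero_mul]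
            · have hz : coeff t (V ^ j - X ^ j) = 0 := by
                rw [hXv]
                exact coeff_add_pow_sub_pow (by omega) hord (by omega) (by omega)
              have h2 : coeff t (V ^ j) - coeff t (X ^ j) = 0 := by
                rw [← map_sub]; exact hz
              rw [sub_eq_zero] at h2
              rw [h2]
          rw [Finset.sum_congr rfl hcong, ← coeff_psComp, psComp_X_right]
        rw [e0, map_add, e1, ihk t ht]
        push_cast
        ring
    have hp2 : 2 ≤ p := (Fact.out : p.Prime).two_le
    refine ⟨n * p, by nlinarith, ?_⟩
    intro t ht
    rw [key p t (by omega), ZMod.natCast_self, zero_mul]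

end Grow

end PsCompAux

/-- Lemma of Lubin (lemma `lubnarch`): let `w ∈ X + X²·𝔽_p[[X]]` be invertible and
nontorsion for composition, and let `f ∈ X·𝔽_p[[X]]` be separable (`f' ≠ 0`).
If `w ∘ f = f ∘ w`, then `f` is invertible, i.e. `f'(0) ∈ 𝔽_p^×`. -/
theorem lubin_commuting_separable_invertible
    {p : ℕ} [Fact p.Prime]
    (w f : PowerSeries (ZMod p))
    (hw0 : PowerSeries.coeff 0 w = 0)
    (hw1 : PowerSeries.coeff 1 w = 1)
    (hwnt : ∀ n : ℕ, 1 ≤ n → (fun h => psComp h w)^[n] (X : PowerSeries (ZMod p)) ≠ X)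
    (hf0 : PowerSeries.coeff 0 f = 0)
    (hfsep : ∃ n : ℕ, ((n + 1 : ZMod p)) * PowerSeries.coeff (n + 1) f ≠ 0)
    (hcomm : psComp w f = psComp f w) :
    PowerSeries.coeff 1 f ≠ 0 := by
  classical
  by_contra hf1
  have hw0' : constantCoeff w = 0 := by
    rw [← coeff_zero_eq_constantCoeff_apply]; exact hw0
  have hf0' : constantCoeff f = 0 := by
    rw [← coeff_zero_eq_constantCoeff_apply]; exact hf0
  set D := Nat.find hfsep with hDdef
  have hD : ((D : ZMod p) + 1) * coeff (D + 1) f ≠ 0 := Nat.find_spec hfsep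
  have hjc : ∀ j : ℕ, j ≤ D → (j : ZMod p) * coeff j f = 0 := by
    intro j hj
    match j, hj with
    | 0, _ => simp
    | (i+1), hj =>
      have hi : i < D := by omega
      have h2 : ¬ (((i : ZMod p) + 1) * coeff (i + 1) f ≠ 0) := Nat.find_min hfsep hi
      rw [not_not] at h2
      push_cast
      exact h2
  have hford : ∀ j, j < 2 → coeff j f = 0 := by
    intro j hj; interval_cases j
    · exact hf0
    · exact hf1
  obtain ⟨n, hn1, hord⟩ := PsCompAux.grow hw0' hw1 (D + 2) (by omega)
  set V := (fun h => psComp h w)^[n] (X : PowerSeries (ZMod p)) with hVdef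
  set u := V - X with hudef
  have hVc : constantCoeff V = 0 := PsCompAux.constantCoeff_iter n
  have hVX : V = X + u := by rw [hudef]; ring
  have hune : u ≠ 0 := sub_ne_zero.mpr (hwnt n hn1)
  have hexists : ∃ t, coeff t u ≠ 0 := by
    by_contra h
    push_neg at h
    exact hune (PowerSeries.ext fun t => by rw [h t, map_zero])
  set M' := Nat.find hexists with hM'def
  have hb : coeff M' u ≠ 0 := Nat.find_spec hexists
  have humin : ∀ t, t < M' → coeff t u = 0 := fun t ht =>
    not_not.mp (Nat.find_min hexists ht)
  have hM'M : D + 2 ≤ M' := by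
    by_contra h
    push_neg at h
    exact hb (hord M' (by omega))
  set N := M' + D with hNdef
  -- Step 1 : coeff N (V ∘ f) = coeff N f
  have step1 : coeff N (psComp V f) = coeff N f := by
    rw [PsCompAux.coeff_psComp]
    have hsplit : ∀ j ∈ Finset.range (N + 1),
        coeff j V * coeff N (f ^ j)
        = coeff j X * coeff N (f ^ j)
          + coeff j u * coeff N (f ^ j) := by
      intro j _
      rw [hVX, map_add]; ring
    rw [Finset.sum_congr rfl hsplit, Finset.sum_add_distrib, ← PsCompAux.coeff_psComp,
      PsCompAux.psComp_X_left f hf0']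
    have hz : ∀ j ∈ Finset.range (N + 1),
        coeff j u * coeff N (f ^ j) = 0 := by
      intro j _
      rcases lt_or_ge j M' with hj | hj
      · rw [humin j hj, zero_mul]
      · have hc : coeff N (f ^ j) = 0 := by
          have hdvd : (X : PowerSeries (ZMod p)) ^ (2 * j) ∣ f ^ j := by
            rw [pow_mul]
            exact pow_dvd_pow_of_dvd (X_pow_dvd_iff.mpr hford) j
          exact X_pow_dvd_iff.mp hdvd N (by omega)
        rw [hc, mul_zero]
    rw [Finset.sum_eq_zero hz, add_zero]
  -- Step 2 : coeff N (f ∘ V) = coeff N f + (D+1) c_{D+1} b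
  have hVpow : ∀ j : ℕ, coeff N (V ^ j)
      = (∑ k ∈ Finset.range j,
          coeff N ((X : PowerSeries (ZMod p)) ^ k * u ^ (j - k)) * (j.choose k : ZMod p))
        + coeff N ((X : PowerSeries (ZMod p)) ^ j) := by
    intro j
    rw [hVX, add_pow, map_sum, Finset.sum_range_succ]
    congr 1
    · refine Finset.sum_congr rfl fun k _ => ?_
      have hcast : ((j.choose k : ℕ) : PowerSeries (ZMod p))
          = PowerSeries.C ((j.choose k : ℕ) : ZMod p) := by simp
      rw [hcast, coeff_mul_C]
    · simp
  have hterm0 : ∀ j k : ℕ, k < j → 2 ≤ j - k →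
      coeff N ((X : PowerSeries (ZMod p)) ^ k * u ^ (j - k)) = 0 := by
    intro j k hk h2
    refine PsCompAux.coeff_X_pow_mul_pow_eq_zero humin ?_
    have hmul : 2 * M' ≤ (j - k) * M' := Nat.mul_le_mul_right _ h2
    omega
  have step2 : coeff N (psComp f V) = coeff N f
      + ((D : ZMod p) + 1) * coeff (D + 1) f * coeff M' u := by
    rw [PsCompAux.coeff_psComp]
    have e1 : ∀ j ∈ Finset.range (N + 1),
        coeff j f * coeff N (V ^ j)
        = (coeff j f * ∑ k ∈ Finset.range j,
            coeff N ((X : PowerSeries (ZMod p)) ^ k * u ^ (j - k)) * (j.choose k : ZMod p))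
          + coeff j f * coeff N ((X : PowerSeries (ZMod p)) ^ j) := by
      intro j _
      rw [hVpow j]; ring
    rw [Finset.sum_congr rfl e1, Finset.sum_add_distrib, ← PsCompAux.coeff_psComp,
      PsCompAux.psComp_X_right, add_comm]
    congr 1
    · -- the double sum equals the single surviving term
      rw [Finset.sum_eq_single (D + 1)]
      · rw [Finset.mul_sum, Finset.sum_eq_single D]
        · have hDD : D + 1 - D = 1 := by omega
          rw [hDD, pow_one, Nat.choose_succ_self_right]
          have hco : coeff N ((X : PowerSeries (ZMod p)) ^ D * u) = coeff M' u := by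
            rw [hNdef, coeff_X_pow_mul]
          rw [hco]
          push_cast
          ring
        · intro k hk hkD
          have hk2 : k < D + 1 := Finset.mem_range.mp hk
          rw [hterm0 (D + 1) k (by omega) (by omega), zero_mul, mul_zero]
        · intro h
          exact absurd (Finset.mem_range.mpr (by omega)) h
      · intro j hj hjD
        rw [Finset.mul_sum]
        refine Finset.sum_eq_zero fun k hk => ?_
        have hkj : k < j := Finset.mem_range.mp hk
        rcases Nat.lt_or_ge (j - k) 2 with h2 | h2
        · -- j - k = 1, i.e. j = k + 1
          have hjk : j = k + 1 := by omega
          subst hjk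
          rcases Nat.lt_or_ge k D with hkD | hkD
          · -- j = k+1 ≤ D : use hjc
            have hkk : k + 1 - k = 1 := by omega
            rw [hkk, pow_one, Nat.choose_succ_self_right]
            have h0 := hjc (k + 1) (by omega)
            have : coeff (k + 1) f
                * (coeff N ((X : PowerSeries (ZMod p)) ^ k * u) * ((k + 1 : ℕ) : ZMod p))
                = ((k + 1 : ℕ) : ZMod p) * coeff (k + 1) f
                  * coeff N ((X : PowerSeries (ZMod p)) ^ k * u) := by ring
            rw [this]
            push_cast
            push_cast at h0
            rw [h0, zero_mul]
          · -- j = k+1 ≥ D+2 : coefficient of X^k * u vanishes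
            have hkD2 : D + 1 ≤ k := by omega
            have hkk : k + 1 - k = 1 := by omega
            rw [hkk, pow_one]
            have hz : coeff N ((X : PowerSeries (ZMod p)) ^ k * u) = 0 := by
              have := PsCompAux.coeff_X_pow_mul_pow_eq_zero (u := u) (m := M') humin
                (a := k) (i := 1) (t := N) (by omega)
              simpa using this
            rw [hz, zero_mul, mul_zero]
        · rw [hterm0 j k hkj h2, zero_mul, mul_zero]
      · intro h
        exact absurd (Finset.mem_range.mpr (by omega)) h
    -- done with congr? second component was handled by psComp_X_right already
  have hcomm2 : psComp f V = psComp V f := PsCompAux.comm_iter hw0' hf0' hcomm n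
  have hfin := step1
  rw [← hcomm2, step2] at hfin
  have hT : ((D : ZMod p) + 1) * coeff (D + 1) f * coeff M' u = 0 := by
    linear_combination hfin
  rcases mul_eq_zero.mp hT with h | h
  · exact hD h
  · exact hb h
end

section
/- Let E = E((X)) (notation: 𝐄 = E((X)), field of Laurent series over a characteristic-p field), with Γ_k = 1+p^k Z_p acting continuously and semi-linearly on a finite-dimensional 𝐄-vector space M. Then there exists an E[[X]]-lattice in M that is stable under Γ_k. -/
open PowerSeries

/-- The `X`-adic valuation on `E((X))`. -/
noncomputable def latval {E : Type*} [Field E] (f : LaurentSeries E) : EReal :=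
  ⨅ j : f.support, (((j : ℤ) : ℝ) : EReal)

/-- The valuation on `M` attached to a basis `e` (min of the valuations of coordinates). -/
noncomputable def basval {E : Type*} [Field E] {M : Type*} [AddCommGroup M]
    [Module (LaurentSeries E) M] {d : ℕ} (e : Module.Basis (Fin d) (LaurentSeries E) M)
    (x : M) : EReal :=
  ⨅ i : Fin d, latval (e.repr x i)


-- expansion lemma: (1+y)^n = 1 + n y + y^2 S
theorem binom2 {R : Type*} [CommRing R] (y : R) (n : ℕ) :
    ∃ S : R, (1 + y) ^ n = 1 + n * y + y ^ 2 * S := by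
  induction n with
  | zero => exact ⟨0, by simp⟩
  | succ n ih =>
    obtain ⟨S, hS⟩ := ih
    refine ⟨S + n + y * S, ?_⟩
    rw [pow_succ, hS]
    push_cast
    ring

theorem binomP {R : Type*} [CommRing R] (p : ℕ) (hp : p.Prime) (y : R) :
    ∃ T : R, (1 + y) ^ p = 1 + p * y + p * (y ^ 2 * T) + y ^ p := by
  have h := add_pow y 1 p
  simp only [one_pow, mul_one] at h
  -- h : (y + 1)^p = ∑ k in range (p+1), y^k * C(p,k)
  have h2 : (2 : ℕ) ≤ p := hp.two_le
  have hsplit : Finset.range (p+1) = Finset.Ico 0 2 ∪ Finset.Ico 2 p ∪ Finset.Ico p (p+1) := by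
    rw [Finset.range_eq_Ico, Finset.Ico_union_Ico_eq_Ico (by omega) (by omega),
      Finset.Ico_union_Ico_eq_Ico (by omega) (by omega)]
  have hdvd : (p : R) * y ^ 2 ∣ ∑ k ∈ Finset.Ico 2 p, y ^ k * (p.choose k : R) := by
    refine Finset.dvd_sum fun k hk => ?_
    rw [Finset.mem_Ico] at hk
    obtain ⟨m, hm⟩ := hp.dvd_choose_self (by omega) hk.2
    refine ⟨y ^ (k - 2) * m, ?_⟩
    rw [hm]
    push_cast
    rw [show y ^ k = y ^ 2 * y ^ (k - 2) by rw [← pow_add]; congr 1; omega]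
    ring
  obtain ⟨T, hT⟩ := hdvd
  refine ⟨T, ?_⟩
  have : (1 + y) ^ p = (y + 1) ^ p := by ring
  rw [this, h, hsplit, Finset.sum_union (by simp [Finset.disjoint_left]; omega),
    Finset.sum_union (by simp [Finset.disjoint_left]; omega)]
  rw [Nat.Ico_succ_singleton, Finset.sum_singleton, Nat.choose_self]
  have : Finset.Ico 0 2 = {0, 1} := rfl
  rw [this, Finset.sum_insert (by simp), Finset.sum_singleton]
  rw [hT]
  simp [Nat.choose_one_right]
  ring

section padic
variable {p : ℕ} [Fact p.Prime]

theorem padicUnit_one_add (m : ℕ) (hm : 1 ≤ m) (c : ℤ_[p]) :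
    IsUnit (1 + (p : ℤ_[p]) ^ m * c) := by
  by_contra h
  rw [PadicInt.not_isUnit_iff, PadicInt.norm_lt_one_iff_dvd] at h
  have h1 : (p : ℤ_[p]) ∣ (p : ℤ_[p]) ^ m * c :=
    Dvd.dvd.mul_right (dvd_pow_self _ (by omega)) c
  have : (p : ℤ_[p]) ∣ 1 := by
    have := dvd_sub h h1
    simpa using this
  have := PadicInt.norm_lt_one_iff_dvd (1 : ℤ_[p]) |>.mpr this
  simp at this

-- prime power lemma: (1+p^m c)^p = 1 + p^(m+1) * (c + p s)
theorem primePowStep (m : ℕ) (hm : 1 ≤ m) (hm2 : p = 2 → 2 ≤ m) (c : ℤ_[p]) :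
    ∃ s : ℤ_[p], (1 + (p:ℤ_[p]) ^ m * c) ^ p = 1 + (p:ℤ_[p]) ^ (m+1) * (c + p * s) := by
  have hp := (Fact.out : p.Prime)
  obtain ⟨T, hT⟩ := binomP p hp ((p:ℤ_[p]) ^ m * c)
  have hmp : m + 2 ≤ m * p := by
    have h2 := hp.two_le
    rcases Nat.lt_or_ge p 3 with h3 | h3
    · have hq : p = 2 := by omega
      subst hq; have := hm2 rfl; omega
    · nlinarith
  refine ⟨(p:ℤ_[p]) ^ (m-1) * c ^ 2 * T + (p:ℤ_[p]) ^ (m*p - (m+2)) * c ^ p, ?_⟩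
  rw [hT]
  have e1 : (p:ℤ_[p]) * (((p:ℤ_[p]) ^ m * c) ^ 2 * T)
      = (p:ℤ_[p]) ^ (m+1) * ((p:ℤ_[p]) * ((p:ℤ_[p]) ^ (m-1) * c ^ 2 * T)) := by
    rw [mul_pow, ← pow_mul]
    rw [show (p:ℤ_[p]) * ((p:ℤ_[p]) ^ (m*2) * c ^ 2 * T)
        = (p:ℤ_[p]) ^ (m*2+1) * (c ^ 2 * T) by rw [pow_succ]; ring]
    rw [show m*2+1 = (m+1) + 1 + (m-1) by omega, pow_add, pow_add]
    ring
  have e2 : ((p:ℤ_[p]) ^ m * c) ^ p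
      = (p:ℤ_[p]) ^ (m+1) * ((p:ℤ_[p]) * ((p:ℤ_[p]) ^ (m*p - (m+2)) * c ^ p)) := by
    rw [mul_pow, ← pow_mul]
    rw [show (p:ℤ_[p]) ^ (m*p) = (p:ℤ_[p]) ^ ((m+1) + 1 + (m*p - (m+2))) from by
      congr 1; omega, pow_add, pow_add]
    ring
  rw [e1, e2]
  rw [show (p:ℤ_[p]) * ((p:ℤ_[p]) ^ m * c) = (p:ℤ_[p]) ^ (m+1) * c by rw [pow_succ]; ring]
  ring

-- decomposition at one level: given 1+p^m b and generator 1+p^m c with c ≡ unit mod p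
theorem oneStep (m : ℕ) (hm : 1 ≤ m) (c b : ℤ_[p]) (hc : (p:ℤ_[p]) ∣ c - 1) :
    ∃ v : ℕ, v < p ∧ ∃ w : ℤ_[p],
      1 + (p:ℤ_[p]) ^ m * b = (1 + (p:ℤ_[p]) ^ m * c) ^ v * (1 + (p:ℤ_[p]) ^ (m+1) * w) := by
  set v : ℕ := b.appr 1 with hv
  have hvlt : v < p := by have := b.appr_lt 1; simpa using this
  have hbv : (p:ℤ_[p]) ∣ b - v := by
    have := b.appr_spec 1
    rw [Ideal.mem_span_singleton] at this
    simpa using this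
  have hdvd : (p:ℤ_[p]) ∣ b - v * c := by
    have : b - v * c = (b - v) - v * (c - 1) := by ring
    rw [this]
    exact dvd_sub hbv (Dvd.dvd.mul_left hc _)
  obtain ⟨t, ht⟩ := hdvd
  obtain ⟨S, hS⟩ := binom2 ((p:ℤ_[p]) ^ m * c) v
  -- A := (1+p^m c)^v = 1 + p^m (v c) + p^{2m} c^2 S
  have hA : IsUnit ((1 + (p:ℤ_[p]) ^ m * c) ^ v) := (padicUnit_one_add m hm c).pow v
  obtain ⟨u, hu⟩ := hA
  refine ⟨v, hvlt, ↑u⁻¹ * (t - (p:ℤ_[p]) ^ (m-1) * (c ^ 2 * S)), ?_⟩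
  have key : (1 + (p:ℤ_[p]) ^ m * b) - (1 + (p:ℤ_[p]) ^ m * c) ^ v
      = (p:ℤ_[p]) ^ (m+1) * (t - (p:ℤ_[p]) ^ (m-1) * (c ^ 2 * S)) := by
    rw [hS, mul_pow, ← pow_mul]
    have : (p:ℤ_[p]) ^ m * b - (p:ℤ_[p]) ^ m * (v * c) = (p:ℤ_[p]) ^ m * (b - v * c) := by ring
    rw [show (p:ℤ_[p]) ^ (m*2) = (p:ℤ_[p]) ^ (m+1) * (p:ℤ_[p]) ^ (m-1) by
      rw [← pow_add]; congr 1; omega]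
    rw [show (p:ℤ_[p]) ^ m * (b : ℤ_[p]) = (p:ℤ_[p]) ^ m * ((b - ↑v * c) + ↑v * c) by ring,
      ht]
    rw [show (p:ℤ_[p]) ^ m * ((p:ℤ_[p]) * t + ↑v * c) = (p:ℤ_[p])^(m+1) * t + (p:ℤ_[p])^m * (↑v * c) by rw [pow_succ]; ring]
    push_cast
    ring
  have huu : (u : ℤ_[p]) * ↑u⁻¹ = 1 := by
    rw [← Units.val_mul, mul_inv_cancel, Units.val_one]
  have expand : (1 + (p:ℤ_[p]) ^ m * c) ^ v
        * (1 + (p:ℤ_[p]) ^ (m+1) * (↑u⁻¹ * (t - (p:ℤ_[p]) ^ (m-1) * (c ^ 2 * S))))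
      = (1 + (p:ℤ_[p]) ^ m * c) ^ v
        + (p:ℤ_[p]) ^ (m+1) * (t - (p:ℤ_[p]) ^ (m-1) * (c ^ 2 * S)) := by
    rw [← hu]
    calc (u:ℤ_[p]) * (1 + (p:ℤ_[p]) ^ (m+1) * (↑u⁻¹ * (t - (p:ℤ_[p]) ^ (m-1) * (c ^ 2 * S))))
        = (u:ℤ_[p]) + ((u:ℤ_[p]) * ↑u⁻¹) * ((p:ℤ_[p]) ^ (m+1) * (t - (p:ℤ_[p]) ^ (m-1) * (c ^ 2 * S))) := by
          ring
      _ = _ := by rw [huu]; ring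
  rw [expand]
  linear_combination key

end padic

section padic
variable {p : ℕ} [Fact p.Prime]

/-- Membership in `Γ_k` as used in the theorem statement. -/
def Gam (p k : ℕ) [Fact p.Prime] (g : ℤ_[p]ˣ) : Prop :=
  ∃ b, (g : ℤ_[p]) = 1 + (p : ℤ_[p]) ^ k * b

theorem Gam_one (k : ℕ) : Gam p k 1 := ⟨0, by simp⟩

theorem Gam_mul {k : ℕ} {g h : ℤ_[p]ˣ} (hg : Gam p k g) (hh : Gam p k h) :
    Gam p k (g * h) := by
  obtain ⟨a, ha⟩ := hg; obtain ⟨b, hb⟩ := hh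
  exact ⟨a + b + (p:ℤ_[p])^k * (a * b), by rw [Units.val_mul, ha, hb]; ring⟩

theorem Gam_pow {k : ℕ} {g : ℤ_[p]ˣ} (hg : Gam p k g) (n : ℕ) : Gam p k (g ^ n) := by
  induction n with
  | zero => simpa using Gam_one k
  | succ n ih => rw [pow_succ]; exact Gam_mul ih hg

theorem Gam_mono {k i i' : ℕ} (h : i' ≤ i) {g : ℤ_[p]ˣ} (hg : Gam p (k + i) g) :
    Gam p (k + i') g := by
  obtain ⟨b, hb⟩ := hg
  refine ⟨(p:ℤ_[p]) ^ (i - i') * b, ?_⟩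
  rw [hb, ← mul_assoc, ← pow_add, show k + i' + (i - i') = k + i from by omega]

/-- The generator `γ₀ = 1 + p^k` as a unit. -/
noncomputable def gamma0 (p k : ℕ) [Fact p.Prime] (hk : 1 ≤ k) : ℤ_[p]ˣ :=
  (padicUnit_one_add k hk 1).unit

theorem gamma0_val {k : ℕ} (hk : 1 ≤ k) : ((gamma0 p k hk : ℤ_[p]ˣ) : ℤ_[p]) = 1 + (p:ℤ_[p])^k := by
  simp [gamma0, IsUnit.unit_spec]

theorem Gam_gamma0 {k : ℕ} (hk : 1 ≤ k) : Gam p k (gamma0 p k hk) :=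
  ⟨1, by rw [gamma0_val hk]; ring⟩

theorem gammaA {k : ℕ} (hk : 1 ≤ k) (hk2 : p = 2 → 2 ≤ k) (i : ℕ) :
    ∃ c : ℤ_[p], ((gamma0 p k hk ^ (p ^ i) : ℤ_[p]ˣ) : ℤ_[p]) = 1 + (p:ℤ_[p]) ^ (k+i) * c
      ∧ (p:ℤ_[p]) ∣ c - 1 := by
  induction i with
  | zero =>
    exact ⟨1, by rw [pow_zero, pow_one, gamma0_val hk]; simp, by simp⟩
  | succ i ih =>
    obtain ⟨c, hc, hcd⟩ := ih
    obtain ⟨s, hs⟩ := primePowStep (k+i) (by omega) (fun h => by have := hk2 h; omega) c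
    refine ⟨c + p * s, ?_, ?_⟩
    · rw [pow_succ, pow_mul, Units.val_pow_eq_pow_val, hc, hs,
        show k + (i + 1) = k + i + 1 from by omega]
    · have : c + p * s - 1 = (c - 1) + p * s := by ring
      rw [this]
      exact dvd_add hcd (Dvd.intro s rfl)

/-- Every element of `Γ_k` is `γ₀^u · h` with `u < p^i` and `h ∈ Γ_{k+i}`. -/
theorem decomp {k : ℕ} (hk : 1 ≤ k) (hk2 : p = 2 → 2 ≤ k) (i : ℕ) (g : ℤ_[p]ˣ)
    (hg : Gam p k g) :
    ∃ u : ℕ, u < p ^ i ∧ ∃ h : ℤ_[p]ˣ, Gam p (k + i) h ∧ g = gamma0 p k hk ^ u * h := by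
  induction i with
  | zero => exact ⟨0, by simp, g, by simpa using hg, by simp⟩
  | succ i ih =>
    obtain ⟨u, hu, h, ⟨b, hb⟩, hgh⟩ := ih
    obtain ⟨c, hc, hcd⟩ := gammaA hk hk2 i
    obtain ⟨v, hv, w, hw⟩ := oneStep (k+i) (by omega) c b hcd
    -- h = (γ₀^{p^i})^v * h' with h' ∈ Γ_{k+i+1}
    have hAunit : IsUnit (1 + (p:ℤ_[p]) ^ (k+i) * c) := padicUnit_one_add (k+i) (by omega) c
    set γi := gamma0 p k hk ^ (p ^ i) with hγi
    have hγival : ((γi ^ v : ℤ_[p]ˣ) : ℤ_[p]) = (1 + (p:ℤ_[p]) ^ (k+i) * c) ^ v := by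
      rw [Units.val_pow_eq_pow_val, hc]
    set h' : ℤ_[p]ˣ := (γi ^ v)⁻¹ * h with hh'
    have hh'val : ((h' : ℤ_[p]ˣ) : ℤ_[p]) = 1 + (p:ℤ_[p]) ^ (k+i+1) * w := by
      have h1 : ((γi ^ v : ℤ_[p]ˣ) : ℤ_[p]) * ((((γi ^ v)⁻¹ : ℤ_[p]ˣ)) : ℤ_[p]) = 1 := by
        rw [← Units.val_mul, mul_inv_cancel, Units.val_one]
      have : ((γi ^ v : ℤ_[p]ˣ) : ℤ_[p]) * ((h' : ℤ_[p]ˣ) : ℤ_[p])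
          = ((γi ^ v : ℤ_[p]ˣ) : ℤ_[p]) * (1 + (p:ℤ_[p]) ^ (k+i+1) * w) := by
        rw [hh', Units.val_mul, ← mul_assoc, h1, one_mul, hγival, ← hw, hb]
      have hinj := hAunit.pow v
      -- cancel the unit
      have hcancel : IsUnit ((γi ^ v : ℤ_[p]ˣ) : ℤ_[p]) := (γi ^ v).isUnit
      exact mul_left_cancel₀ hcancel.ne_zero this
    refine ⟨u + p ^ i * v, ?_, h', ⟨w, hh'val⟩, ?_⟩
    · have hple : v ≤ p - 1 := by have := (Fact.out : p.Prime).two_le; omega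
      have h1 : p ^ i * v ≤ p ^ i * (p - 1) := Nat.mul_le_mul_left _ hple
      have hp2 := (Fact.out : p.Prime).two_le
      have hpos : p ^ i * 1 ≤ p ^ i * p := Nat.mul_le_mul_left _ (by omega)
      have hmul : p ^ i * (p - 1) + p ^ i * 1 = p ^ i * p := by
        rw [Nat.mul_sub]
        omega
      have hfin : p ^ (i+1) = p ^ i * p := pow_succ p i
      omega
    · rw [hgh, hh', pow_add, pow_mul]
      rw [← hγi]
      group

/-- Membership in the lattice generated by `gen`. -/
def IsLat (E : Type*) [Field E] {M : Type*} [AddCommGroup M] [Module (LaurentSeries E) M]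
    {r : ℕ} (gen : Fin r → M) (z : M) : Prop :=
  ∃ c : Fin r → PowerSeries E, z = ∑ t, HahnSeries.ofPowerSeries ℤ E (c t) • gen t

section islat
variable {E : Type*} [Field E] {M : Type*} [AddCommGroup M] [Module (LaurentSeries E) M]
  {r : ℕ} {gen : Fin r → M}

theorem IsLat_zero : IsLat E gen (0 : M) := ⟨0, by simp⟩

theorem IsLat_add {x y : M} (hx : IsLat E gen x) (hy : IsLat E gen y) : IsLat E gen (x + y) := by
  obtain ⟨cx, rfl⟩ := hx; obtain ⟨cy, rfl⟩ := hy
  refine ⟨cx + cy, ?_⟩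
  rw [← Finset.sum_add_distrib]
  exact Finset.sum_congr rfl fun t _ => by rw [Pi.add_apply, map_add, add_smul]

theorem IsLat_smul (a : PowerSeries E) {x : M} (hx : IsLat E gen x) :
    IsLat E gen (HahnSeries.ofPowerSeries ℤ E a • x) := by
  obtain ⟨cx, rfl⟩ := hx
  refine ⟨fun t => a * cx t, ?_⟩
  rw [Finset.smul_sum]
  exact Finset.sum_congr rfl fun t _ => by rw [map_mul, smul_smul]

theorem IsLat_gen (t : Fin r) : IsLat E gen (gen t) := by
  refine ⟨fun s => if s = t then 1 else 0, ?_⟩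
  rw [Finset.sum_eq_single t]
  · simp
  · intro s _ hs; simp [hs]
  · intro h; exact absurd (Finset.mem_univ t) h

theorem IsLat_sum {ι : Type*} (s : Finset ι) (f : ι → M) (h : ∀ t ∈ s, IsLat E gen (f t)) :
    IsLat E gen (∑ t ∈ s, f t) :=
  Finset.sum_induction f (IsLat E gen) (fun _ _ => IsLat_add) IsLat_zero h

end islat

section laurent
variable {E : Type*} [Field E]

theorem latval_ofPowerSeries_nonneg (c : PowerSeries E) :
    (0 : EReal) ≤ latval (HahnSeries.ofPowerSeries ℤ E c) := by
  refine le_iInf fun j => ?_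
  obtain ⟨j, hj⟩ := j
  rw [HahnSeries.mem_support] at hj
  have hj0 : 0 ≤ j := by
    by_contra hneg
    push_neg at hneg
    refine hj ?_
    rw [HahnSeries.ofPowerSeries_apply]
    refine HahnSeries.embDomain_notin_range ?_
    rintro ⟨n, hn⟩
    simp only [RelEmbedding.coe_mk, Function.Embedding.coeFn_mk, Nat.castOrderEmbedding_apply] at hn
    omega
  exact_mod_cast hj0
  
theorem exists_of_latval_nonneg {f : LaurentSeries E} (h : (0 : EReal) ≤ latval f) :
    ∃ c : PowerSeries E, f = HahnSeries.ofPowerSeries ℤ E c := by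
  have hsupp : ∀ j : ℤ, j ∈ f.support → 0 ≤ j := by
    intro j hj
    have := iInf_le (fun j : f.support => (((j : ℤ) : ℝ) : EReal)) ⟨j, hj⟩
    have h2 : (0 : EReal) ≤ (((j : ℤ) : ℝ) : EReal) := le_trans h this
    exact_mod_cast h2
  refine ⟨PowerSeries.mk fun n => f.coeff n, ?_⟩
  ext j
  rcases le_or_gt 0 j with hj | hj
  · lift j to ℕ using hj
    rw [HahnSeries.ofPowerSeries_apply_coeff]
    simp
  · have h1 : f.coeff j = 0 := by
      by_contra hne
      exact absurd (hsupp j (HahnSeries.mem_support f j |>.2 hne)) (by omega)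
    rw [h1]
    symm
    rw [HahnSeries.ofPowerSeries_apply]
    refine HahnSeries.embDomain_notin_range ?_
    rintro ⟨n, hn⟩
    simp only [RelEmbedding.coe_mk, Function.Embedding.coeFn_mk, Nat.castOrderEmbedding_apply] at hn
    omega
end laurent


section valaux
variable {E : Type*} [Field E] {M : Type*} [AddCommGroup M] [Module (LaurentSeries E) M]

theorem latval_zero : latval (0 : LaurentSeries E) = ⊤ := by
  unfold latval
  rw [HahnSeries.support_zero]
  exact iInf_of_empty _

theorem basval_zero {d : ℕ} (e : Module.Basis (Fin d) (LaurentSeries E) M) :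
    basval e (0 : M) = ⊤ := by
  unfold basval
  have h : ∀ i : Fin d, latval ((e.repr (0:M)) i) = ⊤ := by
    intro i
    rw [map_zero]
    exact latval_zero
  simp only [h, iInf_top]

end valaux

/-- Prop `gamlat`: if `Γ_k = 1 + p^k ℤ_p` acts continuously and semi-linearly on a
finite-dimensional `E((X))`-vector space `M`, then there is a `Γ_k`-stable
`E[[X]]`-lattice in `M`. -/
theorem exists_stable_lattice
    {p : ℕ} [Fact p.Prime] {E : Type*} [Field E] [CharP E p]
    {M : Type*} [AddCommGroup M] [Module (LaurentSeries E) M]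
    (d : ℕ) (e : Module.Basis (Fin d) (LaurentSeries E) M)
    (k : ℕ) (hk : 1 ≤ k) (hk2 : p = 2 → 2 ≤ k)
    -- the semi-linear action: `σ` on `E((X))`, `ρ` on `M`, defined on `Γ_k`
    (σ : ℤ_[p]ˣ → (LaurentSeries E ≃+* LaurentSeries E))
    (ρ : ℤ_[p]ˣ → (M ≃+ M))
    (hσmul : ∀ g h : ℤ_[p]ˣ, (∃ b, (g : ℤ_[p]) = 1 + (p : ℤ_[p]) ^ k * b) →
      (∃ b, (h : ℤ_[p]) = 1 + (p : ℤ_[p]) ^ k * b) →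
      ∀ f : LaurentSeries E, σ (g * h) f = σ g (σ h f))
    (hρmul : ∀ g h : ℤ_[p]ˣ, (∃ b, (g : ℤ_[p]) = 1 + (p : ℤ_[p]) ^ k * b) →
      (∃ b, (h : ℤ_[p]) = 1 + (p : ℤ_[p]) ^ k * b) →
      ∀ x : M, ρ (g * h) x = ρ g (ρ h x))
    (hσX : ∀ g : ℤ_[p]ˣ, (∃ b, (g : ℤ_[p]) = 1 + (p : ℤ_[p]) ^ k * b) →
      σ g (HahnSeries.ofPowerSeries ℤ E X) =
        HahnSeries.ofPowerSeries ℤ E (onePlusXPow p E (g : ℤ_[p]) - 1))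
    (hσiso : ∀ g : ℤ_[p]ˣ, (∃ b, (g : ℤ_[p]) = 1 + (p : ℤ_[p]) ^ k * b) →
      ∀ f : LaurentSeries E, latval (σ g f) = latval f)
    (hsemi : ∀ g : ℤ_[p]ˣ, (∃ b, (g : ℤ_[p]) = 1 + (p : ℤ_[p]) ^ k * b) →
      ∀ (c : LaurentSeries E) (x : M), ρ g (c • x) = σ g c • ρ g x)
    -- continuity of the action map `Γ_k × M → M`
    (hcont : ∀ (g₀ : ℤ_[p]ˣ), (∃ b, (g₀ : ℤ_[p]) = 1 + (p : ℤ_[p]) ^ k * b) →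
      ∀ (x₀ : M) (N : ℝ), ∃ (i : ℕ) (δ : ℝ), ∀ (g : ℤ_[p]ˣ) (x : M),
        (∃ b, (g : ℤ_[p]) = 1 + (p : ℤ_[p]) ^ k * b) →
        (∃ b, (g : ℤ_[p]) = (g₀ : ℤ_[p]) * (1 + (p : ℤ_[p]) ^ (k + i) * b)) →
        (δ : EReal) ≤ basval e (x - x₀) →
        (N : EReal) ≤ basval e (ρ g x - ρ g₀ x₀)) :
    ∃ (r : ℕ) (gen : Fin r → M),
      Submodule.span (LaurentSeries E) (Set.range gen) = ⊤ ∧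
      ∀ (γ : ℤ_[p]ˣ), (∃ b, (γ : ℤ_[p]) = 1 + (p : ℤ_[p]) ^ k * b) →
        ∀ x : M, (∃ c : Fin r → PowerSeries E,
            x = ∑ i, HahnSeries.ofPowerSeries ℤ E (c i) • gen i) →
          ∃ c : Fin r → PowerSeries E,
            ρ γ x = ∑ i, HahnSeries.ofPowerSeries ℤ E (c i) • gen i := by
  
  clear hσmul hσX
  -- `ρ 1` is the identity
  have hρ1 : ∀ x : M, ρ 1 x = x := by
    intro x
    have h1 : Gam p k 1 := Gam_one k
    have h2 := hρmul 1 1 h1 h1 x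
    rw [one_mul] at h2
    exact ((ρ 1).injective h2).symm
  -- continuity: find `i` such that `Γ_{k+i}` moves basis vectors into the standard lattice
  have hbound : ∃ i : ℕ, ∀ g : ℤ_[p]ˣ, Gam p (k + i) g → ∀ j : Fin d,
      (0 : EReal) ≤ basval e (ρ g (e j) - e j) := by
    have H : ∀ j : Fin d, ∃ i : ℕ, ∀ g : ℤ_[p]ˣ, Gam p (k + i) g →
        (0 : EReal) ≤ basval e (ρ g (e j) - e j) := by
      intro j
      obtain ⟨i, δ, hiδ⟩ := hcont 1 (Gam_one k) (e j) 0
      refine ⟨i, fun g hg => ?_⟩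
      have hgk : Gam p k g := Gam_mono (Nat.zero_le i) hg
      have h2 : ∃ b, (g : ℤ_[p]) = ((1 : ℤ_[p]ˣ) : ℤ_[p]) * (1 + (p : ℤ_[p]) ^ (k + i) * b) := by
        obtain ⟨b, hb⟩ := hg
        exact ⟨b, by rw [hb, Units.val_one, one_mul]⟩
      have h3 : ((δ : ℝ) : EReal) ≤ basval e (e j - e j) := by
        rw [sub_self, basval_zero]
        exact le_top
      have h4 := hiδ g (e j) hgk h2 h3
      rw [hρ1] at h4
      exact_mod_cast h4
    choose I hI using H
    exact ⟨Finset.univ.sup I, fun g hg j =>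
      hI j g (Gam_mono (Finset.le_sup (Finset.mem_univ j)) hg)⟩
  obtain ⟨i, hstab⟩ := hbound
  have hTpos : 0 < p ^ i := pow_pos (Fact.out : p.Prime).pos i
  set γ0 : ℤ_[p]ˣ := gamma0 p k hk with hγ0
  set gen : Fin (p ^ i * d) → M := fun t =>
    ρ (γ0 ^ (((finProdFinEquiv.symm t).1 : Fin (p ^ i)) : ℕ)) (e (finProdFinEquiv.symm t).2)
    with hgen
  have hgenval : ∀ (a : Fin (p ^ i)) (j : Fin d),
      gen (finProdFinEquiv (a, j)) = ρ (γ0 ^ (a : ℕ)) (e j) := by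
    intro a j
    simp only [hgen, Equiv.symm_apply_apply]
  -- σ g maps power series to power series
  have hσPS : ∀ g : ℤ_[p]ˣ, Gam p k g → ∀ a : PowerSeries E,
      ∃ a', σ g (HahnSeries.ofPowerSeries ℤ E a) = HahnSeries.ofPowerSeries ℤ E a' := by
    intro g hg a
    refine exists_of_latval_nonneg ?_
    rw [hσiso g hg]
    exact latval_ofPowerSeries_nonneg a
  -- the key claim
  have hkey : ∀ γ : ℤ_[p]ˣ, Gam p k γ → ∀ t : Fin (p ^ i * d), IsLat E gen (ρ γ (gen t)) := by
    intro γ hγ t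
    set a : Fin (p ^ i) := (finProdFinEquiv.symm t).1 with ha
    set j : Fin d := (finProdFinEquiv.symm t).2 with hj
    have hga : Gam p k (γ0 ^ (a : ℕ)) := Gam_pow (Gam_gamma0 hk) _
    have hgent : gen t = ρ (γ0 ^ (a : ℕ)) (e j) := rfl
    rw [hgent, ← hρmul γ (γ0 ^ (a : ℕ)) hγ hga (e j)]
    obtain ⟨u, hu, h, hh, hdec⟩ := decomp hk hk2 i (γ * γ0 ^ (a : ℕ)) (Gam_mul hγ hga)
    have hhk : Gam p k h := Gam_mono (Nat.zero_le i) hh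
    have hgu : Gam p k (γ0 ^ u) := Gam_pow (Gam_gamma0 hk) u
    rw [hdec, hρmul (γ0 ^ u) h hgu hhk (e j)]
    have h0 := hstab h hh j
    have hrep : ∀ m : Fin d, ∃ bm : PowerSeries E,
        (e.repr (ρ h (e j) - e j)) m = HahnSeries.ofPowerSeries ℤ E bm := by
      intro m
      refine exists_of_latval_nonneg (le_trans h0 ?_)
      exact iInf_le (fun m => latval (e.repr (ρ h (e j) - e j) m)) m
    choose b hb using hrep
    have hy : ρ h (e j) = e j + ∑ m, HahnSeries.ofPowerSeries ℤ E (b m) • e m := by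
      have h1 : ∑ m, HahnSeries.ofPowerSeries ℤ E (b m) • e m = ρ h (e j) - e j := by
        calc ∑ m, HahnSeries.ofPowerSeries ℤ E (b m) • e m
            = ∑ m, e.repr (ρ h (e j) - e j) m • e m :=
              Finset.sum_congr rfl fun m _ => by rw [hb m]
          _ = ρ h (e j) - e j := e.sum_repr _
      rw [h1]
      abel
    rw [hy, map_add, map_sum]
    refine IsLat_add ?_ ?_
    · have h2 : ρ (γ0 ^ u) (e j) = gen (finProdFinEquiv (⟨u, hu⟩, j)) := by
        rw [hgenval ⟨u, hu⟩ j]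
      rw [h2]
      exact IsLat_gen _
    · refine IsLat_sum _ _ fun m _ => ?_
      rw [hsemi (γ0 ^ u) hgu (HahnSeries.ofPowerSeries ℤ E (b m)) (e m)]
      obtain ⟨b', hb'⟩ := hσPS (γ0 ^ u) hgu (b m)
      rw [hb']
      have h3 : ρ (γ0 ^ u) (e m) = gen (finProdFinEquiv (⟨u, hu⟩, m)) := by
        rw [hgenval ⟨u, hu⟩ m]
      rw [h3]
      exact IsLat_smul _ (IsLat_gen _)
  refine ⟨p ^ i * d, gen, ?_, ?_⟩
  · rw [eq_top_iff, ← e.span_eq]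
    refine Submodule.span_mono ?_
    rintro _ ⟨j, rfl⟩
    refine ⟨finProdFinEquiv (⟨0, hTpos⟩, j), ?_⟩
    rw [hgenval ⟨0, hTpos⟩ j]
    show ρ (γ0 ^ (0 : ℕ)) (e j) = e j
    rw [pow_zero, hρ1]
  · intro γ hγ x hx
    obtain ⟨c, rfl⟩ := hx
    have hfin : IsLat E gen (ρ γ (∑ t, HahnSeries.ofPowerSeries ℤ E (c t) • gen t)) := by
      rw [map_sum]
      refine IsLat_sum _ _ fun t _ => ?_
      rw [hsemi γ hγ]
      obtain ⟨c', hc'⟩ := hσPS γ hγ (c t)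
      rw [hc']
      exact IsLat_smul _ (hkey γ hγ t)
    obtain ⟨c', hc'⟩ := hfin
    exact ⟨c', hc'⟩
end padic
end
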